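/- arXiv:1706.07445 — 9 statements merged into one kernel-verified Lean document; each statement's English description precedes it below -/
import Mathlib

section
/- For every integer d ≥ 0 and real s > 0, the limit lim_{e→∞} S_d^{p^e}(s·p^e)/p^{ed} exists and equals Σ_{i=0}^{⌊s⌋} ((-1)^i / d!) · C(d,i) · (s-i)^d, where p > 1 is any fixed integer. -/
open Finset Filter

/-- `S d m r` counts tuples `(a_1, ..., a_d)` of nonnegative integers with
`a_1 + ... + a_d < r` and `a_j < m` for all `j`. -/
noncomputable def S (d m : ℕ) (r : ℝ) : ℕ :=
  ((Fintype.piFinset fun _ : Fin d => Finset.range m).filter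
    fun a => ((∑ j, a j : ℕ) : ℝ) < r).card

/-- `E d s = ∑_{i=0}^{⌊s⌋} ((-1)^i / d!) * C(d,i) * (s - i)^d` for `s > 0`. -/
noncomputable def E (d : ℕ) (s : ℝ) : ℝ :=
  ∑ i ∈ Finset.range (⌊s⌋.toNat + 1),
    ((-1 : ℝ) ^ i / d.factorial) * (d.choose i : ℝ) * (s - i) ^ d


/-- tuples with all coordinates `< M` -/
def Box (d M : ℕ) : Finset (Fin d → ℕ) := Fintype.piFinset fun _ => Finset.range M

/-- count of tuples with sum `≤ k` (box bound `k+1` is no constraint) -/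
def W (d k : ℕ) : ℕ := ((Box d (k + 1)).filter fun a => ∑ j, a j ≤ k).card

/-- count of tuples with sum `< n` -/
def V (d n : ℕ) : ℕ := ((Box d n).filter fun a => ∑ j, a j < n).card

lemma mem_Box {d M : ℕ} {a : Fin d → ℕ} : a ∈ Box d M ↔ ∀ j, a j < M := by
  simp [Box, Fintype.mem_piFinset]

lemma boxfree (d k M : ℕ) (h : k < M) :
    ((Box d M).filter fun a => ∑ j, a j ≤ k).card = W d k := by
  congr 1
  ext a
  simp only [mem_filter, mem_Box]
  constructor
  · rintro ⟨-, h2⟩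
    exact ⟨fun j => lt_of_le_of_lt (le_trans (Finset.single_le_sum
      (fun i _ => Nat.zero_le (a i)) (Finset.mem_univ j)) h2) (Nat.lt_succ_self k), h2⟩
  · rintro ⟨-, h2⟩
    exact ⟨fun j => lt_of_le_of_lt (le_trans (Finset.single_le_sum
      (fun i _ => Nat.zero_le (a i)) (Finset.mem_univ j)) h2) h, h2⟩

lemma V_succ (d k : ℕ) : V d (k + 1) = W d k := by
  unfold V W
  congr 1
  apply Finset.filter_congr
  intro a _
  simp [Nat.lt_succ_iff]

lemma V_zero (d : ℕ) : V d 0 = 0 := by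
  unfold V
  rw [Finset.filter_false_of_mem, Finset.card_empty]
  intro a _
  simp

lemma sum_piFinset_cons {n : ℕ} {β : Type*} [AddCommMonoid β]
    (S : Finset ℕ) (f : (Fin (n + 1) → ℕ) → β) :
    ∑ r ∈ Fintype.piFinset (fun _ : Fin (n + 1) => S), f r
      = ∑ x ∈ S, ∑ t ∈ Fintype.piFinset (fun _ : Fin n => S), f (Fin.cons x t) := by
  have h := Finset.filter_piFinset_eq_map_consEquiv (fun _ : Fin (n + 1) => S)
    (fun _ : Fin n → ℕ => True)
  simp only [Finset.filter_true] at h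
  rw [h, Finset.sum_map, Finset.sum_product]
  rfl

lemma W_eq (d k : ℕ) : W d k = (k + d).choose d := by
  induction d generalizing k with
  | zero =>
    unfold W Box
    rw [Finset.filter_true_of_mem (fun a _ => by simp), Fintype.card_piFinset]
    simp
  | succ d ih =>
    have key : W (d + 1) k = ∑ x ∈ Finset.range (k + 1), W d (k - x) := by
      unfold W Box
      rw [Finset.card_filter, sum_piFinset_cons]
      refine Finset.sum_congr rfl fun x hx => ?_
      rw [Finset.mem_range, Nat.lt_succ_iff] at hx
      have : ∀ t : Fin d → ℕ, (x + ∑ j, t j ≤ k) ↔ (∑ j, t j ≤ k - x) := by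
        intro t; omega
      calc ∑ t ∈ Fintype.piFinset (fun _ : Fin d => Finset.range (k + 1)),
              (if ∑ j, Fin.cons x t j ≤ k then 1 else 0)
          = ∑ t ∈ Fintype.piFinset (fun _ : Fin d => Finset.range (k + 1)),
              (if ∑ j, t j ≤ k - x then 1 else 0) := by
            refine Finset.sum_congr rfl fun t _ => ?_
            simp only [Fin.sum_cons]
            exact if_congr (this t) rfl rfl
        _ = ((Box d (k + 1)).filter fun t => ∑ j, t j ≤ k - x).card := by
            rw [Finset.card_filter]; rfl
        _ = W d (k - x) := boxfree d (k - x) (k + 1) (by omega)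
    rw [key]
    have : ∀ x ∈ Finset.range (k + 1), W d (k - x) = (k - x + d).choose d :=
      fun x _ => ih (k - x)
    rw [Finset.sum_congr rfl this]
    have hr : ∑ x ∈ Finset.range (k + 1), (k - x + d).choose d
        = ∑ x ∈ Finset.range (k + 1), (x + d).choose d := by
      rw [← Finset.sum_range_reflect (fun x => (x + d).choose d) (k + 1)]
      exact Finset.sum_congr rfl fun x _ => by norm_num
    rw [hr]
    have hic : ∑ m ∈ Finset.Icc d (k + d), m.choose d
        = ∑ x ∈ Finset.range (k + 1), (x + d).choose d := by
      rw [← Finset.Ico_add_one_right_eq_Icc, Finset.sum_Ico_eq_sum_range]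
      have h2 : k + d + 1 - d = k + 1 := by omega
      rw [h2]
      exact Finset.sum_congr rfl fun x _ => by rw [Nat.add_comm]
    rw [← hic, Nat.sum_Icc_choose]
    congr 1

lemma sum_ite_mem_card (d m : ℕ) (T : Finset (Fin d)) :
    ∑ j : Fin d, (if j ∈ T then m else 0) = T.card * m := by
  rw [Finset.sum_ite_mem, Finset.univ_inter, Finset.sum_const, smul_eq_mul]

lemma card_shift (d m k : ℕ) (T : Finset (Fin d)) :
    ((Box d (m + k + 1)).filter fun a => (∑ j, a j ≤ k) ∧ ∀ j ∈ T, m ≤ a j).card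
      = ((Box d (m + k + 1)).filter fun b => (∑ j, b j) + T.card * m ≤ k).card := by
  refine Finset.card_bij' (fun a _ => fun j => a j - (if j ∈ T then m else 0))
    (fun b _ => fun j => b j + (if j ∈ T then m else 0)) ?_ ?_ ?_ ?_
  · intro a ha
    rw [Finset.mem_filter, mem_Box] at ha ⊢
    obtain ⟨hbox, hsum, hT⟩ := ha
    have hsub : ∑ j, (a j - (if j ∈ T then m else 0))
        = (∑ j, a j) - T.card * m := by
      rw [Finset.sum_tsub_distrib _ (fun j _ => by split <;> [exact hT j (by assumption); omega]),
        sum_ite_mem_card]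
    have hle : T.card * m ≤ ∑ j, a j := by
      rw [← sum_ite_mem_card d m T]
      exact Finset.sum_le_sum fun j _ => by split <;> [exact hT j (by assumption); omega]
    constructor
    · exact fun j => lt_of_le_of_lt (Nat.sub_le _ _) (hbox j)
    · rw [hsub]; omega
  · intro b hb
    rw [Finset.mem_filter, mem_Box] at hb ⊢
    obtain ⟨hbox, hsum⟩ := hb
    have hbj : ∀ j, b j ≤ k := fun j => le_trans (le_trans
      (Finset.single_le_sum (fun i _ => Nat.zero_le (b i)) (Finset.mem_univ j))
      (Nat.le_add_right _ _)) hsum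
    refine ⟨fun j => by have := hbj j; split <;> omega, ?_,
      fun j hj => by simp [hj]⟩
    have : ∑ j, (b j + (if j ∈ T then m else 0)) = (∑ j, b j) + T.card * m := by
      rw [Finset.sum_add_distrib, sum_ite_mem_card]
    rw [this]; exact hsum
  · intro a ha
    funext j
    rw [Finset.mem_filter] at ha
    dsimp only
    by_cases hj : j ∈ T
    · have := ha.2.2 j hj
      simp only [if_pos hj]
      omega
    · simp only [if_neg hj]
      omega
  · intro b _
    funext j
    dsimp only
    split <;> omega

lemma count_eq_V (d M c k : ℕ) (hM : k < M) :
    ((Box d M).filter fun b => (∑ j, b j) + c ≤ k).card = V d (k + 1 - c) := by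
  rcases le_or_gt c k with h | h
  · have : ((Box d M).filter fun b => (∑ j, b j) + c ≤ k)
        = ((Box d M).filter fun b => ∑ j, b j ≤ k - c) := by
      apply Finset.filter_congr; intro b _; omega
    rw [this, boxfree d (k - c) M (by omega), ← V_succ]
    congr 1; omega
  · rw [Finset.filter_false_of_mem (fun b _ => by omega), Finset.card_empty]
    have : k + 1 - c = 0 := by omega
    rw [this, V_zero]

lemma IE (d m k : ℕ) :
    (((Box d m).filter fun a => ∑ j, a j ≤ k).card : ℤ)
      = ∑ i ∈ Finset.range (d + 1),
          (-1 : ℤ) ^ i * (d.choose i : ℤ) * (V d (k + 1 - i * m) : ℤ) := by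
  set M := m + k + 1 with hM
  -- Step 1: enlarge the box
  have h1 : ((Box d m).filter fun a => ∑ j, a j ≤ k)
      = ((Box d M).filter fun a => ∑ j, a j ≤ k).filter fun a => ∀ j, a j < m := by
    rw [Finset.filter_filter]
    ext a
    simp only [mem_filter, mem_Box]
    constructor
    · rintro ⟨h1, h2⟩
      exact ⟨fun j => lt_of_lt_of_le (h1 j) (by omega), h2, h1⟩
    · rintro ⟨-, h2, h3⟩
      exact ⟨h3, h2⟩
  rw [h1, Finset.card_filter]
  push_cast
  -- Step 2: expand the indicator as a product and apply prod_add
  have h2 : ∀ a : Fin d → ℕ,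
      ((if ∀ j, a j < m then 1 else 0 : ℤ))
        = ∑ T ∈ (Finset.univ : Finset (Fin d)).powerset,
            (-1 : ℤ) ^ T.card * (if ∀ j ∈ T, m ≤ a j then 1 else 0) := by
    intro a
    classical
    set B := (Finset.univ : Finset (Fin d)).filter (fun j => m ≤ a j) with hB
    have hmem : ∀ T : Finset (Fin d), T ∈ B.powerset ↔ ∀ j ∈ T, m ≤ a j := by
      intro T
      simp [hB, Finset.mem_powerset, Finset.subset_iff]
    have hsum : ∑ T ∈ (Finset.univ : Finset (Fin d)).powerset,
        (-1 : ℤ) ^ T.card * (if ∀ j ∈ T, m ≤ a j then 1 else 0)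
        = ∑ T ∈ B.powerset, (-1 : ℤ) ^ T.card := by
      rw [← Finset.sum_subset (Finset.powerset_mono.2 (Finset.subset_univ B))]
      · exact Finset.sum_congr rfl fun T hT => by rw [if_pos ((hmem T).1 hT), mul_one]
      · intro T _ hT
        rw [if_neg (fun h => hT ((hmem T).2 h)), mul_zero]
    rw [hsum, Finset.sum_powerset_neg_one_pow_card]
    by_cases hall : ∀ j, a j < m
    · rw [if_pos hall, if_pos]
      rw [hB, Finset.filter_eq_empty_iff]
      exact fun j _ => Nat.not_le.2 (hall j)
    · have hne : ¬ (B = ∅) := by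
        rw [hB, Finset.filter_eq_empty_iff]
        push_neg
        push_neg at hall
        obtain ⟨j, hj⟩ := hall
        exact ⟨j, Finset.mem_univ j, hj⟩
      rw [if_neg hall, if_neg hne]
  rw [Finset.sum_congr rfl (fun a _ => h2 a), Finset.sum_comm]
  have h3 : ∀ T : Finset (Fin d),
      ∑ a ∈ (Box d M).filter (fun a => ∑ j, a j ≤ k),
          ((-1 : ℤ) ^ T.card * (if ∀ j ∈ T, m ≤ a j then 1 else 0))
        = (-1 : ℤ) ^ T.card * (V d (k + 1 - T.card * m) : ℤ) := by
    intro T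
    rw [← Finset.mul_sum]
    congr 1
    have hcard : ∑ a ∈ (Box d M).filter (fun a => ∑ j, a j ≤ k),
        (if ∀ j ∈ T, m ≤ a j then (1 : ℤ) else 0)
        = ((((Box d M).filter fun a => ∑ j, a j ≤ k).filter
            fun a => ∀ j ∈ T, m ≤ a j).card : ℤ) := by
      rw [Finset.card_filter]
      push_cast
      rfl
    have h4 : (((Box d M).filter fun a => (∑ j, a j ≤ k) ∧ ∀ j ∈ T, m ≤ a j).card)
        = V d (k + 1 - T.card * m) := by
      have h5 := card_shift d m k T
      have h6 := count_eq_V d (m + k + 1) (T.card * m) k (Nat.lt_succ_of_le (Nat.le_add_left k m))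
      rw [hM]
      exact h5.trans h6
    rw [hcard, Finset.filter_filter, h4]
  rw [Finset.sum_congr rfl (fun T _ => h3 T)]
  rw [Finset.powerset_card_disjiUnion]
  erw [Finset.sum_disjiUnion]
  refine Finset.sum_congr (by simp) fun i hi => ?_
  have hconst : ∀ T ∈ Finset.powersetCard i (Finset.univ : Finset (Fin d)),
      (-1 : ℤ) ^ T.card * (V d (k + 1 - T.card * m) : ℤ)
        = (-1 : ℤ) ^ i * (V d (k + 1 - i * m) : ℤ) := by
    intro T hT
    rw [(Finset.mem_powersetCard.1 hT).2]
  rw [Finset.sum_congr rfl hconst, Finset.sum_const, Finset.card_powersetCard,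
    Finset.card_univ, Fintype.card_fin, nsmul_eq_mul]
  push_cast
  ring

lemma asc_prod (u d : ℕ) : ∏ j ∈ Finset.range d, (u + j) = u.ascFactorial d := by
  induction d with
  | zero => simp
  | succ d ih => rw [Finset.prod_range_succ, ih, Nat.ascFactorial_succ, Nat.mul_comm]

lemma V_cast (d v : ℕ) :
    (V d (v + 1) : ℝ) = (∏ j ∈ Finset.range d, ((v + 1 + j : ℕ) : ℝ)) / d.factorial := by
  have h1 : V d (v + 1) = (v + d).choose d := by rw [V_succ, W_eq]
  have h2 : (∏ j ∈ Finset.range d, (v + 1 + j)) = d.factorial * (v + d).choose d := by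
    rw [asc_prod, Nat.ascFactorial_eq_factorial_mul_choose]
  have h3 : ((∏ j ∈ Finset.range d, (v + 1 + j) : ℕ) : ℝ)
      = (d.factorial : ℝ) * ((v + d).choose d : ℝ) := by exact_mod_cast h2
  rw [h1]
  push_cast at h3 ⊢
  rw [h3]
  field_simp

lemma S_eq_IE (d m : ℕ) (r : ℝ) (hr : 0 < r) :
    (S d m r : ℤ) = ∑ i ∈ Finset.range (d + 1),
        (-1 : ℤ) ^ i * (d.choose i : ℤ) * (V d (⌈r⌉.toNat - i * m) : ℤ) := by
  have hpos : (0 : ℤ) < ⌈r⌉ := Int.ceil_pos.2 hr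
  have hn : 1 ≤ ⌈r⌉.toNat := by omega
  have hc : (⌈r⌉ : ℤ) = ((⌈r⌉.toNat : ℕ) : ℤ) := (Int.toNat_of_nonneg hpos.le).symm
  have hfil : ((Fintype.piFinset fun _ : Fin d => Finset.range m).filter
        fun a => ((∑ j, a j : ℕ) : ℝ) < r)
      = (Box d m).filter fun a => ∑ j, a j ≤ ⌈r⌉.toNat - 1 := by
    apply Finset.filter_congr
    intro a _
    rw [show (((∑ j, a j : ℕ) : ℝ) < r) ↔ (((∑ j, a j : ℕ) : ℤ) < ⌈r⌉) from (Int.lt_ceil).symm,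
      hc]
    omega
  have hS : S d m r = ((Box d m).filter fun a => ∑ j, a j ≤ ⌈r⌉.toNat - 1).card := by
    rw [S, hfil]
  rw [hS, IE d m (⌈r⌉.toNat - 1)]
  refine Finset.sum_congr rfl fun i _ => ?_
  rw [Nat.sub_add_cancel hn]

/-- the cutoff sequence -/
noncomputable def nseq (p : ℕ) (s : ℝ) (e : ℕ) : ℕ := ⌈s * (p : ℝ) ^ e⌉.toNat

/-- the `i`-th term of the inclusion–exclusion expansion at scale `e` -/
noncomputable def termf (d p : ℕ) (s : ℝ) (e i : ℕ) : ℝ :=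
  (-1 : ℝ) ^ i * (d.choose i : ℝ) * (V d (nseq p s e - i * p ^ e) : ℝ) / (p : ℝ) ^ (e * d)

/-- the limit of the `i`-th term -/
noncomputable def hfun (d : ℕ) (s : ℝ) (i : ℕ) : ℝ :=
  (-1 : ℝ) ^ i / d.factorial * (d.choose i : ℝ) * (if (i : ℝ) < s then (s - i) ^ d else 0)

section Analysis

variable {p : ℕ} {s : ℝ}

lemma hp0 (hp : 1 < p) : (0 : ℝ) < (p : ℝ) := by
  have : (1 : ℝ) < (p : ℝ) := by exact_mod_cast hp
  linarith

lemma hpe (hp : 1 < p) (e : ℕ) : (0 : ℝ) < (p : ℝ) ^ e := pow_pos (hp0 hp) e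

lemma hptop (hp : 1 < p) : Tendsto (fun e : ℕ => (p : ℝ) ^ e) atTop atTop :=
  tendsto_pow_atTop_atTop_of_one_lt (by exact_mod_cast hp)

lemma nseq_ge (hp : 1 < p) (hs : 0 < s) (e : ℕ) : s * (p : ℝ) ^ e ≤ ((nseq p s e : ℕ) : ℝ) := by
  have hpos : (0 : ℤ) < ⌈s * (p : ℝ) ^ e⌉ := Int.ceil_pos.2 (mul_pos hs (hpe hp e))
  have : ((nseq p s e : ℕ) : ℝ) = ((⌈s * (p : ℝ) ^ e⌉ : ℤ) : ℝ) := by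
    simp only [nseq]
    exact_mod_cast congrArg (fun z : ℤ => (z : ℝ)) (Int.toNat_of_nonneg hpos.le)
  rw [this]
  exact Int.le_ceil _

lemma nseq_lt (hp : 1 < p) (hs : 0 < s) (e : ℕ) : ((nseq p s e : ℕ) : ℝ) < s * (p : ℝ) ^ e + 1 := by
  have hpos : (0 : ℤ) < ⌈s * (p : ℝ) ^ e⌉ := Int.ceil_pos.2 (mul_pos hs (hpe hp e))
  have : ((nseq p s e : ℕ) : ℝ) = ((⌈s * (p : ℝ) ^ e⌉ : ℤ) : ℝ) := by
    simp only [nseq]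
    exact_mod_cast congrArg (fun z : ℤ => (z : ℝ)) (Int.toNat_of_nonneg hpos.le)
  rw [this]
  exact Int.ceil_lt_add_one _

lemma ev_big (hp : 1 < p) (hs : 0 < s) {i : ℕ} (hcase : (i : ℝ) < s) :
    ∀ᶠ e in atTop, i * p ^ e + 1 ≤ nseq p s e := by
  have hev : ∀ᶠ e in atTop, 1 ≤ (s - i) * (p : ℝ) ^ e :=
    tendsto_atTop.1 ((hptop hp).const_mul_atTop (by linarith : (0 : ℝ) < s - i)) 1
  filter_upwards [hev] with e he
  rw [sub_mul] at he
  have h1 : (i : ℝ) * (p : ℝ) ^ e + 1 ≤ s * (p : ℝ) ^ e := by linarith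
  have h2 : ((i * p ^ e + 1 : ℕ) : ℝ) ≤ ((nseq p s e : ℕ) : ℝ) := by
    push_cast
    calc (i : ℝ) * (p : ℝ) ^ e + 1 ≤ s * (p : ℝ) ^ e := h1
      _ ≤ _ := nseq_ge hp hs e
  exact_mod_cast h2

lemma fac_tendsto (hp : 1 < p) (hs : 0 < s) {i : ℕ} (hcase : (i : ℝ) < s) (j : ℕ) :
    Tendsto (fun e => ((nseq p s e - i * p ^ e + j : ℕ) : ℝ) / (p : ℝ) ^ e)
      atTop (nhds (s - i)) := by
  have hub : Tendsto (fun e : ℕ => (s - i) + (1 + j) / (p : ℝ) ^ e) atTop (nhds (s - i)) := by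
    have h0 : Tendsto (fun e : ℕ => (1 + j : ℝ) / (p : ℝ) ^ e) atTop (nhds 0) :=
      Tendsto.div_atTop tendsto_const_nhds (hptop hp)
    simpa using tendsto_const_nhds.add h0
  refine tendsto_of_tendsto_of_tendsto_of_le_of_le' tendsto_const_nhds hub ?_ ?_
  · filter_upwards [ev_big hp hs hcase] with e he
    have hle : i * p ^ e ≤ nseq p s e := by omega
    have hcast : ((nseq p s e - i * p ^ e + j : ℕ) : ℝ)
        = ((nseq p s e : ℕ) : ℝ) - (i : ℝ) * (p : ℝ) ^ e + j := by
      push_cast [hle]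
      ring
    rw [le_div_iff₀ (hpe hp e), hcast, sub_mul]
    have := nseq_ge hp hs e
    have hj : (0 : ℝ) ≤ (j : ℝ) := Nat.cast_nonneg j
    linarith
  · filter_upwards [ev_big hp hs hcase] with e he
    have hle : i * p ^ e ≤ nseq p s e := by omega
    have hcast : ((nseq p s e - i * p ^ e + j : ℕ) : ℝ)
        = ((nseq p s e : ℕ) : ℝ) - (i : ℝ) * (p : ℝ) ^ e + j := by
      push_cast [hle]
      ring
    rw [div_le_iff₀ (hpe hp e), hcast]
    have h1 := nseq_lt hp hs e
    have h2 : ((s - i) + (1 + j) / (p : ℝ) ^ e) * (p : ℝ) ^ e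
        = s * (p : ℝ) ^ e - (i : ℝ) * (p : ℝ) ^ e + (1 + j) := by
      field_simp
    rw [h2]
    linarith

lemma term_tendsto (d : ℕ) (hp : 1 < p) (hs : 0 < s) (i : ℕ) :
    Tendsto (fun e => termf d p s e i) atTop (nhds (hfun d s i)) := by
  rcases lt_or_ge (i : ℝ) s with hcase | hcase
  · have hprod : Tendsto
        (fun e => ∏ j ∈ Finset.range d, ((nseq p s e - i * p ^ e + j : ℕ) : ℝ) / (p : ℝ) ^ e)
        atTop (nhds ((s - i) ^ d)) := by
      have h0 := tendsto_finset_prod (Finset.range d)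
        (fun j (_ : j ∈ Finset.range d) => fac_tendsto hp hs hcase j)
      simpa using h0
    have hlim : Tendsto
        (fun e => (-1 : ℝ) ^ i * (d.choose i : ℝ) / d.factorial *
          ∏ j ∈ Finset.range d, ((nseq p s e - i * p ^ e + j : ℕ) : ℝ) / (p : ℝ) ^ e)
        atTop (nhds ((-1 : ℝ) ^ i * (d.choose i : ℝ) / d.factorial * (s - i) ^ d)) :=
      hprod.const_mul _
    have hEq : ∀ᶠ e in atTop,
        (-1 : ℝ) ^ i * (d.choose i : ℝ) / d.factorial *
          ∏ j ∈ Finset.range d, ((nseq p s e - i * p ^ e + j : ℕ) : ℝ) / (p : ℝ) ^ e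
        = termf d p s e i := by
      filter_upwards [ev_big hp hs hcase] with e he
      have hu : 1 ≤ nseq p s e - i * p ^ e := by omega
      have hv := V_cast d (nseq p s e - i * p ^ e - 1)
      rw [show nseq p s e - i * p ^ e - 1 + 1 = nseq p s e - i * p ^ e from by omega] at hv
      have hpow : ((p : ℝ) ^ (e * d)) = ∏ _j ∈ Finset.range d, (p : ℝ) ^ e := by
        rw [Finset.prod_const, Finset.card_range, ← pow_mul]
      simp only [termf]
      rw [hv, hpow, Finset.prod_div_distrib]
      have hfac0 : (d.factorial : ℝ) ≠ 0 := by
        exact_mod_cast d.factorial_ne_zero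
      have hprod0 : (∏ _j ∈ Finset.range d, (p : ℝ) ^ e) ≠ 0 :=
        Finset.prod_ne_zero_iff.2 fun _ _ => (hpe hp e).ne'
      field_simp
    have hfi : hfun d s i
        = (-1 : ℝ) ^ i * (d.choose i : ℝ) / d.factorial * (s - i) ^ d := by
      simp only [hfun]
      rw [if_pos hcase]
      ring
    rw [hfi]
    exact hlim.congr' hEq
  · have hzero : ∀ e, termf d p s e i = 0 := by
      intro e
      have h1 : (⌈s * (p : ℝ) ^ e⌉ : ℤ) ≤ ((i * p ^ e : ℕ) : ℤ) := by
        rw [Int.ceil_le]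
        push_cast
        nlinarith [hpe hp e]
      have h2 : nseq p s e ≤ i * p ^ e := by
        simp only [nseq]
        omega
      have h3 : nseq p s e - i * p ^ e = 0 := by omega
      simp only [termf]
      rw [h3, V_zero]
      simp
    have hhz : hfun d s i = 0 := by
      simp only [hfun]
      rw [if_neg (not_lt.2 hcase)]
      ring
    rw [hhz]
    exact Tendsto.congr (fun e => (hzero e).symm) tendsto_const_nhds

end Analysis

theorem tendsto_S_div_pow (d p : ℕ) (hp : 1 < p) (s : ℝ) (hs : 0 < s) :
    Tendsto (fun e : ℕ => (S d (p ^ e) (s * (p : ℝ) ^ e) : ℝ) / (p : ℝ) ^ (e * d))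
      atTop (nhds (E d s)) := by
  set R := max (d + 1) (⌊s⌋.toNat + 1) with hR
  have hB : ∀ e : ℕ, (S d (p ^ e) (s * (p : ℝ) ^ e) : ℝ) / (p : ℝ) ^ (e * d)
      = ∑ i ∈ Finset.range R, termf d p s e i := by
    intro e
    have h1 := S_eq_IE d (p ^ e) (s * (p : ℝ) ^ e) (mul_pos hs (hpe hp e))
    have h2 : (S d (p ^ e) (s * (p : ℝ) ^ e) : ℝ) = ∑ i ∈ Finset.range (d + 1),
        (-1 : ℝ) ^ i * (d.choose i : ℝ) * (V d (nseq p s e - i * p ^ e) : ℝ) := by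
      rw [show nseq p s e = ⌈s * (p : ℝ) ^ e⌉.toNat from rfl]
      exact_mod_cast congrArg (fun z : ℤ => (z : ℝ)) h1
    rw [h2, Finset.sum_div]
    refine Finset.sum_subset (Finset.range_subset_range.2 (le_max_left _ _)) ?_
    intro i _ hi
    rw [Finset.mem_range, not_lt] at hi
    have hch : d.choose i = 0 := Nat.choose_eq_zero_of_lt (by omega)
    have : termf d p s e i = (-1 : ℝ) ^ i * (d.choose i : ℝ) *
        (V d (nseq p s e - i * p ^ e) : ℝ) / (p : ℝ) ^ (e * d) := rfl
    rw [hch]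
    simp
  have hA : E d s = ∑ i ∈ Finset.range R, hfun d s i := by
    rw [E]
    refine Finset.sum_subset_zero_on_sdiff (Finset.range_subset_range.2 (le_max_right _ _)) ?_ ?_
    · intro i hi
      rw [Finset.mem_sdiff, Finset.mem_range, Finset.mem_range, not_lt] at hi
      have hfloor : (0 : ℤ) ≤ ⌊s⌋ := Int.floor_nonneg.2 hs.le
      have hlt : s < (i : ℝ) := by
        calc s < (⌊s⌋ : ℝ) + 1 := Int.lt_floor_add_one s
          _ ≤ (i : ℝ) := by
            have h1 : (⌊s⌋.toNat : ℝ) + 1 ≤ (i : ℝ) := by exact_mod_cast hi.2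
            have h2 : ((⌊s⌋ : ℤ) : ℝ) = ((⌊s⌋.toNat : ℕ) : ℝ) := by
              exact_mod_cast congrArg (fun z : ℤ => (z : ℝ)) (Int.toNat_of_nonneg hfloor).symm
            linarith [h2.le, h2.ge]
      simp only [hfun]
      rw [if_neg (not_lt.2 hlt.le)]
      ring
    · intro i hi
      rw [Finset.mem_range] at hi
      rcases lt_or_ge (i : ℝ) s with hcase | hcase
      · rw [hfun, if_pos hcase]
      · have hfloor : (0 : ℤ) ≤ ⌊s⌋ := Int.floor_nonneg.2 hs.le
        have hle : (i : ℝ) ≤ s := by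
          have h1 : (i : ℤ) ≤ ⌊s⌋ := by omega
          have h2 : ((i : ℤ) : ℝ) ≤ ((⌊s⌋ : ℤ) : ℝ) := by exact_mod_cast h1
          have h3 : ((⌊s⌋ : ℤ) : ℝ) ≤ s := Int.floor_le s
          calc (i : ℝ) = ((i : ℤ) : ℝ) := by push_cast; ring
            _ ≤ s := le_trans h2 h3
        have heq : (i : ℝ) = s := le_antisymm hle hcase
        simp only [hfun]
        rw [if_neg (not_lt.2 hcase)]
        rcases Nat.eq_zero_or_pos d with hd | hd
        · subst hd
          have hi0 : 1 ≤ i := by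
            by_contra hcon
            push_neg at hcon
            interval_cases i
            · rw [show ((0 : ℕ) : ℝ) = 0 from by norm_num] at heq
              exact absurd heq.symm (ne_of_gt hs)
          rw [Nat.choose_eq_zero_of_lt (by omega)]
          push_cast
          ring
        · rw [← heq, sub_self, zero_pow (by omega : d ≠ 0)]
  rw [hA]
  have hC : ∀ i ∈ Finset.range R, Tendsto (fun e => termf d p s e i)
      atTop (nhds (hfun d s i)) := fun i _ => term_tendsto d hp hs i
  exact (tendsto_finset_sum _ hC).congr (fun e => (hB e).symm)
end

section
/- For each integer d ≥ 0, the function E_d(s) is nondecreasing in s on (0,∞). -/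
open Finset

/-- The "plus-part" version of `E`, a fixed finite sum independent of the floor. -/
noncomputable def G (d : ℕ) (s : ℝ) : ℝ :=
  ∑ i ∈ Finset.range (d + 1),
    ((-1 : ℝ) ^ i / d.factorial) * (d.choose i : ℝ) * (max (s - i) 0) ^ d

lemma hasDerivAt_maxpow (n : ℕ) (hn : 1 ≤ n) (x : ℝ) :
    HasDerivAt (fun y : ℝ => max y 0 ^ (n + 1)) ((n + 1) * max x 0 ^ n) x := by
  rcases lt_trichotomy x 0 with hx | hx | hx
  · have h0 : max x 0 = 0 := max_eq_right hx.le
    rw [h0, zero_pow (by omega), mul_zero]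
    have : (fun y : ℝ => max y 0 ^ (n + 1)) =ᶠ[nhds x] fun _ => (0:ℝ) := by
      filter_upwards [eventually_lt_nhds hx] with y hy
      rw [max_eq_right hy.le, zero_pow (by omega)]
    exact (hasDerivAt_const x 0).congr_of_eventuallyEq this
  · subst hx
    rw [max_self, zero_pow (by omega), mul_zero]
    rw [hasDerivAt_iff_tendsto_slope]
    apply squeeze_zero_norm' (a := fun y : ℝ => ‖y‖)
    · filter_upwards [eventually_nhdsWithin_of_eventually_nhds
        (eventually_abs_sub_lt 0 one_pos)] with y hy1
      simp only [slope_def_field, max_self, zero_pow (by omega : n + 1 ≠ 0), sub_zero] at *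
      rcases le_or_gt y 0 with h | h
      · rw [max_eq_right h, zero_pow (by omega), zero_div, norm_zero]
        positivity
      · rw [max_eq_left h.le, pow_succ, mul_div_assoc, div_self h.ne', mul_one,
          Real.norm_eq_abs, Real.norm_eq_abs, abs_pow]
        calc |y| ^ n ≤ |y| ^ 1 := pow_le_pow_of_le_one (abs_nonneg y) hy1.le hn
        _ = |y| := pow_one _
    · exact tendsto_norm_zero.mono_left nhdsWithin_le_nhds
  · have h0 : max x 0 = x := max_eq_left hx.le
    rw [h0]
    have h : (fun y : ℝ => max y 0 ^ (n + 1)) =ᶠ[nhds x] fun y => y ^ (n + 1) := by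
      filter_upwards [eventually_gt_nhds hx] with y hy
      rw [max_eq_left hy.le]
    have := hasDerivAt_pow (n+1) x
    simp only [Nat.add_sub_cancel, Nat.cast_add, Nat.cast_one] at this
    exact this.congr_of_eventuallyEq h

lemma pascal_sum (d : ℕ) (s : ℝ) :
    ∑ i ∈ Finset.range (d + 2),
      ((-1 : ℝ) ^ i / d.factorial) * ((d+1).choose i : ℝ) * (max (s - i) 0) ^ d
    = G d s - G d (s - 1) := by
  rw [Finset.sum_range_succ']
  have split : ∀ i ∈ Finset.range (d+1),
      ((-1:ℝ)^(i+1)/d.factorial) * (((d+1).choose (i+1)):ℝ) * max (s - ↑(i+1)) 0 ^ d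
      = ((-1:ℝ)^(i+1)/d.factorial) * ((d.choose (i+1)):ℝ) * max (s - ↑(i+1)) 0 ^ d
        + (-(((-1:ℝ)^i/d.factorial) * ((d.choose i):ℝ) * max ((s-1) - ↑i) 0 ^ d)) := by
    intro i _
    have hm : max ((s-1) - (i:ℝ)) 0 = max (s - ((i:ℕ)+1 : ℕ)) 0 := by
      congr 1; push_cast; ring
    rw [hm, Nat.choose_succ_succ]
    push_cast
    ring
  rw [Finset.sum_congr rfl split, Finset.sum_add_distrib]
  have hB : ∑ i ∈ Finset.range (d+1),
      (-(((-1:ℝ)^i/d.factorial) * ((d.choose i):ℝ) * max ((s-1) - ↑i) 0 ^ d))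
      = -(G d (s-1)) := by
    rw [Finset.sum_neg_distrib]; rfl
  have hA : (∑ i ∈ Finset.range (d+1),
      ((-1:ℝ)^(i+1)/d.factorial) * ((d.choose (i+1)):ℝ) * max (s - ↑(i+1)) 0 ^ d)
      + ((-1:ℝ)^0/d.factorial) * (((d+1).choose 0):ℝ) * max (s - (0:ℕ)) 0 ^ d
      = G d s := by
    rw [Finset.sum_range_succ, Nat.choose_succ_self]
    unfold G
    rw [Finset.sum_range_succ']
    norm_num
  rw [hB]
  linarith [hA]

lemma hasDerivAt_G (d : ℕ) (hd : 1 ≤ d) (s : ℝ) :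
    HasDerivAt (G (d + 1)) (G d s - G d (s - 1)) s := by
  have key : ∀ i ∈ Finset.range (d + 2), HasDerivAt
      (fun y : ℝ => ((-1 : ℝ) ^ i / (d+1).factorial) * ((d+1).choose i : ℝ) * (max (y - i) 0) ^ (d+1))
      (((-1 : ℝ) ^ i / d.factorial) * ((d+1).choose i : ℝ) * (max (s - i) 0) ^ d) s := by
    intro i _
    have h1 : HasDerivAt (fun y : ℝ => max (y - i) 0 ^ (d + 1))
        ((d + 1) * max (s - i) 0 ^ d) s := by
      have := (hasDerivAt_maxpow d hd (s - i)).comp s ((hasDerivAt_id s).sub_const (i:ℝ))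
      simpa [Function.comp_def] using this
    have h2 := h1.const_mul (((-1 : ℝ) ^ i / (d+1).factorial) * ((d+1).choose i : ℝ))
    convert h2 using 1
    · rfl
    · rfl
    rw [Nat.factorial_succ]
    push_cast
    field_simp [Nat.factorial_succ]
  have hsum := HasDerivAt.fun_sum key
  have hG : G (d+1) = fun y : ℝ => ∑ i ∈ Finset.range (d + 2),
      ((-1 : ℝ) ^ i / (d+1).factorial) * ((d+1).choose i : ℝ) * (max (y - i) 0) ^ (d+1) := by
    funext y; rfl
  rw [hG]
  convert hsum using 1
  · rfl
  · rfl
  exact (pascal_sum d s).symm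

lemma G_one_mono : Monotone (G 1) := by
  have h : ∀ s : ℝ, G 1 s = max s 0 - max (s - 1) 0 := by
    intro s
    simp [G, Finset.sum_range_succ]
    ring
  intro a b hab
  rw [h, h]
  simp only [max_def]
  split_ifs <;> linarith

lemma G_mono (d : ℕ) : Monotone (G (d + 1)) := by
  induction d with
  | zero => exact G_one_mono
  | succ d ih =>
    have hd : ∀ x : ℝ, HasDerivAt (G (d + 2)) (G (d+1) x - G (d+1) (x - 1)) x :=
      fun x => hasDerivAt_G (d+1) (by omega) x
    apply monotone_of_deriv_nonneg (fun x => (hd x).differentiableAt)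
    intro x
    rw [(hd x).deriv]
    have := ih (show x - 1 ≤ x by linarith)
    linarith

lemma E_eq_G (d : ℕ) {s : ℝ} (hs : 0 < s) : E (d + 1) s = G (d + 1) s := by
  set N := max (⌊s⌋.toNat + 1) (d + 2) with hN
  have hcast : ((⌊s⌋.toNat : ℤ) : ℝ) = ((⌊s⌋ : ℤ) : ℝ) := by
    rw [Int.toNat_of_nonneg (Int.floor_nonneg.mpr hs.le)]
  have hfloor : (⌊s⌋.toNat : ℝ) ≤ s := by
    have := Int.floor_le s
    push_cast at hcast ⊢
    rw [hcast]
    exact this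
  have hfloor' : s < (⌊s⌋.toNat : ℝ) + 1 := by
    have := Int.lt_floor_add_one s
    push_cast at hcast ⊢
    rw [hcast]
    exact this
  have h1 : E (d+1) s = ∑ i ∈ Finset.range (⌊s⌋.toNat + 1),
      ((-1:ℝ)^i/(d+1).factorial) * ((d+1).choose i : ℝ) * max (s - i) 0 ^ (d+1) := by
    apply Finset.sum_congr rfl
    intro i hi
    have hile : i ≤ ⌊s⌋.toNat := Nat.lt_succ_iff.mp (Finset.mem_range.mp hi)
    have his : (i:ℝ) ≤ s := le_trans (by exact_mod_cast Nat.cast_le.mpr hile) hfloor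
    rw [max_eq_left (by linarith)]
  have h2 : ∑ i ∈ Finset.range (⌊s⌋.toNat + 1),
      ((-1:ℝ)^i/(d+1).factorial) * ((d+1).choose i : ℝ) * max (s - i) 0 ^ (d+1)
      = ∑ i ∈ Finset.range N,
      ((-1:ℝ)^i/(d+1).factorial) * ((d+1).choose i : ℝ) * max (s - i) 0 ^ (d+1) := by
    apply Finset.sum_subset (Finset.range_subset_range.mpr (le_max_left _ _))
    intro i _ hi
    have : ⌊s⌋.toNat + 1 ≤ i := by simpa [Finset.mem_range, Nat.lt_succ_iff] using hi
    have hsi : s - (i:ℝ) < 0 := by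
      have : ((⌊s⌋.toNat : ℕ) : ℝ) + 1 ≤ (i : ℝ) := by exact_mod_cast this
      linarith
    rw [max_eq_right hsi.le, zero_pow (by omega), mul_zero]
  have h3 : G (d+1) s = ∑ i ∈ Finset.range N,
      ((-1:ℝ)^i/(d+1).factorial) * ((d+1).choose i : ℝ) * max (s - i) 0 ^ (d+1) := by
    apply Finset.sum_subset (Finset.range_subset_range.mpr (le_max_right _ _))
    intro i _ hi
    have : d + 2 ≤ i := by simp [Finset.mem_range] at hi; omega
    rw [Nat.choose_eq_zero_of_lt (by omega)]
    simp
  rw [h1, h2, h3]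

theorem E_monotone (d : ℕ) :
    ∀ s s' : ℝ, 0 < s → s ≤ s' → E d s ≤ E d s' := by
  intro s s' hs hss'
  cases d with
  | zero =>
    have hE0 : ∀ t : ℝ, E 0 t = 1 := by
      intro t
      unfold E
      rw [Finset.sum_eq_single 0]
      · simp
      · intro i _ hi
        rcases Nat.exists_eq_succ_of_ne_zero hi with ⟨j, rfl⟩
        simp [Nat.choose_eq_zero_of_lt]
      · intro h
        exact absurd (Finset.mem_range.mpr (Nat.succ_pos _)) h
    rw [hE0, hE0]
  | succ d =>
    rw [E_eq_G d hs, E_eq_G d (hs.trans_le hss')]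
    exact G_mono d hss'
end

section
/- Let R be a commutative noetherian ring of prime characteristic p and I, J ideals with I not contained in the nilradical, I ⊆ √J, J ⊆ √I, and I contained in the Jacobson radical of R. Then s^J(I) ≤ c^J(I), i.e. lim_e μ_J^I(p^e)/p^e ≤ lim_e ν_J^I(p^e)/p^e, where ν_J^I(p^e) = sup{n : I^n ⊄ J^{[p^e]}} and μ_J^I(p^e) = inf{n : J^{[p^e]} ⊄ I^n}. -/
open Filter

/-- The `q`-th Frobenius power of an ideal: the ideal generated by `q`-th powers of
elements of `J`. -/
def frobPow {R : Type*} [CommRing R] (J : Ideal R) (q : ℕ) : Ideal R :=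
  Ideal.span ((fun x => x ^ q) '' (J : Set R))

section helpers
variable {R : Type*} [CommRing R]

theorem frobPow_le_self (J : Ideal R) {q : ℕ} (hq : q ≠ 0) : frobPow J q ≤ J := by
  rw [frobPow, Ideal.span_le]
  rintro _ ⟨x, hx, rfl⟩
  exact J.pow_mem_of_mem hx q (Nat.pos_of_ne_zero hq)

theorem le_radical_frobPow (J : Ideal R) (q : ℕ) : J ≤ (frobPow J q).radical := by
  intro x hx
  exact ⟨q, Ideal.subset_span ⟨x, hx, rfl⟩⟩

theorem frobPow_mul_le_pow {J I : Ideal R} {q s : ℕ} (h : frobPow J q ≤ I ^ s) (q' : ℕ) :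
    frobPow J (q * q') ≤ I ^ (s * q') := by
  rw [frobPow, Ideal.span_le]
  rintro _ ⟨x, hx, rfl⟩
  have hxq : x ^ q ∈ I ^ s := h (Ideal.subset_span ⟨x, hx, rfl⟩)
  simpa [pow_mul] using Ideal.pow_mem_pow hxq q'

theorem pow_p_mem_frobPow {p : ℕ} [hp : Fact p.Prime] [CharP R p] {J : Ideal R} {q : ℕ}
    {y : R} (hy : y ∈ frobPow J q) : y ^ p ∈ frobPow J (q * p) := by
  refine Submodule.span_induction ?_ ?_ ?_ ?_ hy
  · rintro _ ⟨x, hx, rfl⟩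
    exact Ideal.subset_span ⟨x, hx, by rw [← pow_mul]⟩
  · simp [zero_pow hp.out.ne_zero, Ideal.zero_mem]
  · intro a b _ _ ha hb
    rw [add_pow_char]
    exact Ideal.add_mem _ ha hb
  · intro r a _ ha
    rw [smul_eq_mul, mul_pow]
    exact Ideal.mul_mem_left _ _ ha

theorem span_pow_le_span_prod (S : Finset R) (N : ℕ) :
    (Ideal.span (S : Set R)) ^ N ≤
      Ideal.span {x | ∃ M : Multiset R, (∀ g ∈ M, g ∈ S) ∧ Multiset.card M = N ∧ M.prod = x} := by
  induction N with
  | zero =>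
      rw [pow_zero, Ideal.one_eq_top]
      have : (1 : R) ∈ Ideal.span {x | ∃ M : Multiset R,
          (∀ g ∈ M, g ∈ S) ∧ Multiset.card M = 0 ∧ M.prod = x} :=
        Ideal.subset_span ⟨0, by simp, by simp, by simp⟩
      exact fun x _ => by
        simpa using Ideal.mul_mem_left _ x this
  | succ n ih =>
      rw [pow_succ]
      calc (Ideal.span (S : Set R)) ^ n * Ideal.span (S : Set R)
          ≤ Ideal.span {x | ∃ M : Multiset R, (∀ g ∈ M, g ∈ S) ∧ Multiset.card M = n ∧ M.prod = x}
              * Ideal.span (S : Set R) := Ideal.mul_mono ih le_rfl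
        _ ≤ _ := by
            rw [Ideal.span_mul_span']
            apply Ideal.span_mono
            rintro _ ⟨a, ⟨M, hM, hcard, rfl⟩, g, hg, rfl⟩
            exact ⟨g ::ₘ M, by
              intro y hy
              rcases Multiset.mem_cons.mp hy with rfl | hy
              · exact hg
              · exact hM y hy, by simp [hcard], by simp [Multiset.prod_cons, mul_comm]⟩

theorem pow_mul_le_frobPow_mul {p : ℕ} [hp : Fact p.Prime] [CharP R p] (S : Finset R)
    {J : Ideal R} {q n : ℕ} (h : (Ideal.span (S : Set R)) ^ n ≤ frobPow J q) :
    (Ideal.span (S : Set R)) ^ (p * (n + S.card)) ≤ frobPow J (q * p) := by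
  classical
  refine (span_pow_le_span_prod S _).trans ?_
  rw [Ideal.span_le]
  rintro x ⟨M, hM, hcard, rfl⟩
  have hsub : M.toFinset ⊆ S := fun g hg => hM g (Multiset.mem_toFinset.mp hg)
  set F := M.toFinset with hF
  set b : R → ℕ := fun g => M.count g / p with hb
  set SB := ∑ g ∈ F, b g with hSB
  have hppos : 0 < p := hp.out.pos
  have h1 : ∀ g ∈ F, M.count g ≤ p * b g + (p - 1) := by
    intro g _
    have h0 := Nat.div_add_mod (M.count g) p
    have h0' := Nat.mod_lt (M.count g) hppos
    simp only [hb]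
    omega
  have h2 : p * (n + S.card) ≤ p * SB + S.card * (p - 1) := by
    calc p * (n + S.card) = ∑ g ∈ F, M.count g := by
          rw [hF, Multiset.toFinset_sum_count_eq, hcard]
      _ ≤ ∑ g ∈ F, (p * b g + (p - 1)) := Finset.sum_le_sum h1
      _ = p * SB + F.card * (p - 1) := by
          rw [Finset.sum_add_distrib, ← Finset.mul_sum, Finset.sum_const, smul_eq_mul, hSB]
      _ ≤ p * SB + S.card * (p - 1) :=
          Nat.add_le_add_left (Nat.mul_le_mul_right _ (Finset.card_le_card hsub)) _
  have hn_le : n ≤ SB := by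
    have h4 : S.card * (p - 1) ≤ p * S.card := by
      rw [mul_comm p S.card]
      exact Nat.mul_le_mul_left _ (Nat.sub_le p 1)
    have h5 : p * n + p * S.card ≤ p * SB + p * S.card := by
      calc p * n + p * S.card = p * (n + S.card) := by ring
        _ ≤ p * SB + S.card * (p - 1) := h2
        _ ≤ p * SB + p * S.card := Nat.add_le_add_left h4 _
    exact Nat.le_of_mul_le_mul_left (Nat.le_of_add_le_add_right h5) hppos
  have hprod : M.prod = (∏ g ∈ F, g ^ b g) ^ p * ∏ g ∈ F, g ^ (M.count g % p) := by
    rw [Finset.prod_multiset_count M, ← hF, ← Finset.prod_pow, ← Finset.prod_mul_distrib]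
    apply Finset.prod_congr rfl
    intro g _
    rw [← pow_mul, ← pow_add]
    congr 1
    show M.count g = M.count g / p * p + M.count g % p
    rw [Nat.mul_comm]
    exact (Nat.div_add_mod _ _).symm
  set y := ∏ g ∈ F, g ^ b g with hy
  have hyI : y ∈ (Ideal.span (S : Set R)) ^ SB := by
    have : y ∈ ∏ g ∈ F, (Ideal.span (S : Set R)) ^ b g :=
      Ideal.prod_mem_prod fun g hg =>
        Ideal.pow_mem_pow (Ideal.subset_span (hsub hg)) _
    rwa [Finset.prod_pow_eq_pow_sum] at this
  have hyn : y ∈ frobPow J q := h (Ideal.pow_le_pow_right hn_le hyI)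
  have : y ^ p ∈ frobPow J (q * p) := pow_p_mem_frobPow hyn
  rw [hprod]
  exact Ideal.mul_mem_right _ _ this

end helpers

theorem sThreshold_le_fThreshold {R : Type*} [CommRing R] [IsNoetherianRing R] (p : ℕ)
    [hp : Fact p.Prime] [CharP R p] (I J : Ideal R)
    (hInil : ¬ I ≤ nilradical R)
    (hIJ : I ≤ J.radical) (hJI : J ≤ I.radical)
    (hjac : I ≤ (⊥ : Ideal R).jacobson) :
    ∃ sJI cJI : ℝ,
      Tendsto
        (fun e : ℕ =>
          ((sInf {n : ℕ | ¬ frobPow J (p ^ e) ≤ I ^ n} : ℕ) : ℝ) / (p : ℝ) ^ e)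
        atTop (nhds sJI) ∧
      Tendsto
        (fun e : ℕ =>
          ((sSup {n : ℕ | ¬ I ^ n ≤ frobPow J (p ^ e)} : ℕ) : ℝ) / (p : ℝ) ^ e)
        atTop (nhds cJI) ∧
      sJI ≤ cJI := by
  classical
  have hp2 : 2 ≤ p := hp.out.two_le
  have hppos : 0 < p := hp.out.pos
  -- nontriviality and properness
  have hnt : Nontrivial R := by
    by_contra h
    rw [not_nontrivial_iff_subsingleton] at h
    exact hInil fun x _ => ⟨1, Subsingleton.elim _ _⟩
  have hJne : J ≠ ⊤ := by
    intro hJ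
    have hIrad : I.radical = ⊤ := top_le_iff.mp (hJ ▸ hJI)
    have hI : I = ⊤ := Ideal.radical_eq_top.mp hIrad
    have hjt : (⊥ : Ideal R).jacobson = ⊤ := top_le_iff.mp (hI ▸ hjac)
    have hbot : (⊥ : Ideal R) = ⊤ := Ideal.jacobson_eq_top_iff.mp hjt
    have : (1 : R) ∈ (⊥ : Ideal R) := hbot.symm ▸ Submodule.mem_top
    exact one_ne_zero (Ideal.mem_bot.mp this)
  -- the two counting functions
  set μ : ℕ → ℕ := fun e => sInf {n : ℕ | ¬ frobPow J (p ^ e) ≤ I ^ n} with hμdef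
  set ν : ℕ → ℕ := fun e => sSup {n : ℕ | ¬ I ^ n ≤ frobPow J (p ^ e)} with hνdef
  -- a non-nilpotent element of J
  obtain ⟨z, hzI, hznil⟩ := SetLike.not_le_iff_exists.mp hInil
  obtain ⟨k, hk⟩ := hIJ hzI
  have hxnil : ¬ IsNilpotent (z ^ k) := by
    rintro ⟨j, hj⟩
    exact hznil ⟨k * j, by rw [pow_mul]; exact hj⟩
  -- A e is nonempty (Krull intersection via Nakayama)
  have hA_ne : ∀ e : ℕ, {n : ℕ | ¬ frobPow J (p ^ e) ≤ I ^ n}.Nonempty := by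
    intro e
    by_contra hemp
    rw [Set.not_nonempty_iff_eq_empty] at hemp
    have hall : ∀ n : ℕ, frobPow J (p ^ e) ≤ I ^ n := by
      intro n
      by_contra hn
      exact absurd (hemp ▸ hn : (n : ℕ) ∈ (∅ : Set ℕ)) (Set.notMem_empty n)
    have hxmem : (z ^ k) ^ (p ^ e) ∈ frobPow J (p ^ e) :=
      Ideal.subset_span ⟨z ^ k, hk, rfl⟩
    have hxiInf : (z ^ k) ^ (p ^ e) ∈ (⨅ i : ℕ, I ^ i • ⊤ : Submodule R R) := by
      have heq : (⨅ i : ℕ, I ^ i • ⊤ : Submodule R R) = ⨅ i : ℕ, I ^ i := by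
        simp_rw [smul_eq_mul, ← Ideal.one_eq_top, mul_one]
      rw [heq, Submodule.mem_iInf]
      exact fun i => hall i hxmem
    obtain ⟨r, hr⟩ := (Ideal.mem_iInf_smul_pow_eq_bot_iff I ((z ^ k) ^ (p ^ e))).mp hxiInf
    have hu : IsUnit (1 - (r : R)) := by
      have := Ideal.mem_jacobson_bot.mp (hjac r.2) (-1)
      simpa [mul_neg_one, sub_eq_neg_add] using this
    have hzero : (1 - (r : R)) * (z ^ k) ^ (p ^ e) = 0 := by
      have : (r : R) * (z ^ k) ^ (p ^ e) = (z ^ k) ^ (p ^ e) := by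
        simpa [smul_eq_mul] using hr
      rw [sub_mul, one_mul, this, sub_self]
    have hx0 : (z ^ k) ^ (p ^ e) = 0 := by
      rcases hu with ⟨u, hu'⟩
      have := congrArg (fun t => (↑u⁻¹ : R) * t) hzero
      simpa [← hu', ← mul_assoc] using this
    exact hxnil ⟨p ^ e, hx0⟩
  -- basic μ facts
  have hμ_mem : ∀ e, ¬ frobPow J (p ^ e) ≤ I ^ (μ e) := fun e => Nat.sInf_mem (hA_ne e)
  have hμ_pos : ∀ e, 0 < μ e := by
    intro e
    rcases Nat.eq_zero_or_pos (μ e) with h0 | h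
    · exfalso
      have := hμ_mem e
      rw [h0] at this
      exact this (by simp [Ideal.one_eq_top])
    · exact h
  have hμ_le : ∀ e, frobPow J (p ^ e) ≤ I ^ (μ e - 1) := by
    intro e
    by_contra hc
    have h1 : μ e ≤ μ e - 1 := Nat.sInf_le hc
    have h0 := hμ_pos e
    omega
  have hlt_μ : ∀ e s, frobPow J (p ^ e) ≤ I ^ s → s < μ e := by
    intro e s hs
    by_contra hc
    push_neg at hc
    exact hμ_mem e (hs.trans (Ideal.pow_le_pow_right hc))
  -- basic ν facts
  have hfrob_ne_top : ∀ e : ℕ, frobPow J (p ^ e) ≠ ⊤ := by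
    intro e htop
    exact hJne (top_le_iff.mp (htop ▸ frobPow_le_self J (pow_ne_zero e hppos.ne')))
  have hB0 : ∀ e : ℕ, (0 : ℕ) ∈ {n : ℕ | ¬ I ^ n ≤ frobPow J (p ^ e)} := by
    intro e
    simp only [Set.mem_setOf_eq, pow_zero, Ideal.one_eq_top, top_le_iff]
    exact hfrob_ne_top e
  have hBbdd : ∀ e : ℕ, BddAbove {n : ℕ | ¬ I ^ n ≤ frobPow J (p ^ e)} := by
    intro e
    have hIrad : I ≤ (frobPow J (p ^ e)).radical := by
      refine hIJ.trans ?_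
      have := Ideal.radical_mono (le_radical_frobPow J (p ^ e))
      rwa [Ideal.radical_idem] at this
    obtain ⟨m, hm⟩ := Ideal.exists_pow_le_of_le_radical_of_fg hIrad (IsNoetherian.noetherian I)
    refine ⟨m, fun n hn => ?_⟩
    by_contra hc
    push_neg at hc
    exact hn ((Ideal.pow_le_pow_right hc.le).trans hm)
  have hν_mem : ∀ e, ¬ I ^ (ν e) ≤ frobPow J (p ^ e) :=
    fun e => Nat.sSup_mem ⟨0, hB0 e⟩ (hBbdd e)
  have hν1 : ∀ e, I ^ (ν e + 1) ≤ frobPow J (p ^ e) := by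
    intro e
    by_contra hc
    have : ν e + 1 ≤ ν e := le_csSup (hBbdd e) hc
    omega
  have hν_lt : ∀ e N, I ^ N ≤ frobPow J (p ^ e) → ν e < N := by
    intro e N hN
    by_contra hc
    push_neg at hc
    exact hν_mem e ((Ideal.pow_le_pow_right hc).trans hN)
  -- generators of I
  obtain ⟨S, hS₀⟩ := IsNoetherian.noetherian I
  have hS : Ideal.span (S : Set R) = I := hS₀
  set m := S.card with hm
  set C : ℕ := 2 * (m + 1) with hC
  -- step inequalities
  have hg_step : ∀ e, p * (μ e - 1) ≤ μ (e + 1) - 1 := by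
    intro e
    have h1 : frobPow J (p ^ e * p) ≤ I ^ ((μ e - 1) * p) := frobPow_mul_le_pow (hμ_le e) p
    rw [← pow_succ] at h1
    have h2 := hlt_μ (e + 1) _ h1
    have h3 := hμ_pos (e + 1)
    have h4 : (μ e - 1) * p = p * (μ e - 1) := Nat.mul_comm _ _
    omega
  have hh_step : ∀ e, ν (e + 1) + C ≤ p * (ν e + C) := by
    intro e
    have h1 : (Ideal.span (S : Set R)) ^ (ν e + 1) ≤ frobPow J (p ^ e) := by
      rw [hS]; exact hν1 e
    have h2 := pow_mul_le_frobPow_mul (p := p) S h1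
    rw [hS, ← pow_succ] at h2
    have h3 : ν (e + 1) < p * (ν e + 1 + m) := hν_lt (e + 1) _ h2
    have hX : 2 * (m + 1) ≤ p * (m + 1) := Nat.mul_le_mul_right _ hp2
    have hexp : p * (ν e + 1 + m) = p * ν e + p * (m + 1) := by ring
    have hexp2 : p * (ν e + C) = p * ν e + 2 * (p * (m + 1)) := by rw [hC]; ring
    omega
  -- μ ≤ ν + 2 via Nakayama
  have hμν : ∀ e, μ e ≤ ν e + 2 := by
    intro e
    by_contra hc
    push_neg at hc
    have h1 : I ^ (ν e + 1) ≤ I ^ (ν e + 2) := by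
      calc I ^ (ν e + 1) ≤ frobPow J (p ^ e) := hν1 e
        _ ≤ I ^ (μ e - 1) := hμ_le e
        _ ≤ I ^ (ν e + 2) := Ideal.pow_le_pow_right (by omega)
    have h2 : I ^ (ν e + 1) ≤ I • I ^ (ν e + 1) := by
      rw [smul_eq_mul]
      calc I ^ (ν e + 1) ≤ I ^ (ν e + 2) := h1
        _ = I * I ^ (ν e + 1) := by rw [← pow_succ']
    have h3 := Submodule.eq_bot_of_le_smul_of_le_jacobson_bot I (I ^ (ν e + 1))
      (IsNoetherian.noetherian _) h2 hjac
    apply hInil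
    intro x hx
    refine ⟨ν e + 1, ?_⟩
    have := Ideal.pow_mem_pow hx (ν e + 1)
    rw [h3] at this
    exact Ideal.mem_bot.mp this
  -- real sequences
  have hpR : (1 : ℝ) < (p : ℝ) := by exact_mod_cast hp.out.one_lt
  have hpRpos : (0 : ℝ) < (p : ℝ) := by positivity
  set G : ℕ → ℝ := fun e => ((μ e - 1 : ℕ) : ℝ) / (p : ℝ) ^ e with hG
  set H : ℕ → ℝ := fun e => ((ν e + C : ℕ) : ℝ) / (p : ℝ) ^ e with hH
  have hpow_pos : ∀ e : ℕ, (0 : ℝ) < (p : ℝ) ^ e := fun e => by positivity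
  have hG_mono : Monotone G := by
    apply monotone_nat_of_le_succ
    intro e
    rw [hG]
    simp only
    rw [div_le_div_iff₀ (hpow_pos e) (hpow_pos (e + 1))]
    have hcast : ((p : ℝ)) * ((μ e - 1 : ℕ) : ℝ) ≤ ((μ (e + 1) - 1 : ℕ) : ℝ) := by
      exact_mod_cast hg_step e
    calc ((μ e - 1 : ℕ) : ℝ) * (p : ℝ) ^ (e + 1)
        = ((p : ℝ) * ((μ e - 1 : ℕ) : ℝ)) * (p : ℝ) ^ e := by ring
      _ ≤ ((μ (e + 1) - 1 : ℕ) : ℝ) * (p : ℝ) ^ e := by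
          exact mul_le_mul_of_nonneg_right hcast (hpow_pos e).le
  have hH_anti : Antitone H := by
    apply antitone_nat_of_succ_le
    intro e
    rw [hH]
    simp only
    rw [div_le_div_iff₀ (hpow_pos (e + 1)) (hpow_pos e)]
    have hcast : ((ν (e + 1) + C : ℕ) : ℝ) ≤ (p : ℝ) * ((ν e + C : ℕ) : ℝ) := by
      exact_mod_cast hh_step e
    calc ((ν (e + 1) + C : ℕ) : ℝ) * (p : ℝ) ^ e
        ≤ ((p : ℝ) * ((ν e + C : ℕ) : ℝ)) * (p : ℝ) ^ e :=
          mul_le_mul_of_nonneg_right hcast (hpow_pos e).le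
      _ = ((ν e + C : ℕ) : ℝ) * (p : ℝ) ^ (e + 1) := by ring
  have hGH : ∀ e, G e ≤ H e := by
    intro e
    have hC2 : 2 ≤ C := by rw [hC]; omega
    have hnum : (μ e - 1 : ℕ) ≤ (ν e + C : ℕ) := by
      have := hμν e
      omega
    rw [hG, hH]
    simp only
    rw [div_le_div_iff_of_pos_right (hpow_pos e)]
    exact_mod_cast hnum
  have hH0 : ∀ e, 0 ≤ H e := fun e => div_nonneg (Nat.cast_nonneg _) (hpow_pos e).le
  have hGbdd : BddAbove (Set.range G) := by
    refine ⟨H 0, ?_⟩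
    rintro _ ⟨e, rfl⟩
    exact (hGH e).trans (hH_anti (Nat.zero_le e))
  have hHbdd : BddBelow (Set.range H) := by
    refine ⟨0, ?_⟩
    rintro _ ⟨e, rfl⟩
    exact hH0 e
  have hGtend : Tendsto G atTop (nhds (⨆ e, G e)) := tendsto_atTop_ciSup hG_mono hGbdd
  have hHtend : Tendsto H atTop (nhds (⨅ e, H e)) := tendsto_atTop_ciInf hH_anti hHbdd
  have hinv : Tendsto (fun e : ℕ => ((1 : ℝ) / p) ^ e) atTop (nhds 0) := by
    apply tendsto_pow_atTop_nhds_zero_of_lt_one (by positivity)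
    rw [div_lt_one hpRpos]
    exact hpR
  refine ⟨⨆ e, G e, ⨅ e, H e, ?_, ?_, ?_⟩
  · have heq : ∀ e : ℕ, G e + ((1 : ℝ) / p) ^ e = ((μ e : ℕ) : ℝ) / (p : ℝ) ^ e := by
      intro e
      rw [hG]
      simp only
      rw [Nat.cast_sub (hμ_pos e), one_div_pow]
      ring
    have h := hGtend.add hinv
    rw [add_zero] at h
    exact h.congr heq
  · have heq : ∀ e : ℕ, H e - (C : ℝ) * ((1 : ℝ) / p) ^ e = ((ν e : ℕ) : ℝ) / (p : ℝ) ^ e := by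
      intro e
      rw [hH]
      simp only
      rw [one_div_pow]
      push_cast
      ring
    have h := hHtend.sub (hinv.const_mul (C : ℝ))
    rw [mul_zero, sub_zero] at h
    exact h.congr heq
  · refine le_ciInf fun e' => ciSup_le fun e => ?_
    calc G e ≤ G (max e e') := hG_mono (le_max_left e e')
      _ ≤ H (max e e') := hGH _
      _ ≤ H e' := hH_anti (le_max_right e e')
end

section
/- Let (R,m) be a local ring of prime characteristic p with dim R = d, I and J m-primary ideals, M a finitely generated R-module, and s > 0. Suppose the limit h_s(I,J;M) = lim_{e→∞} ℓ(M/(I^{⌈s·p^e⌉} + J^{[p^e]})M)/p^{ed} exists. Then h_s(I,J;M) ≤ min{ (s^d/d!)·e(I;M), e_HK(J;M) }, where e(I;M) is the Hilbert-Samuel multiplicity and e_HK(J;M) is the Hilbert-Kunz multiplicity. -/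
open Filter

/-- The length of the `R`-module `M/NM` (as a real number), where length is the
supremum of lengths of chains of submodules, i.e. the Krull dimension of the lattice
of submodules of `M/NM`. -/
noncomputable def quotLen (R M : Type*) [CommRing R] [AddCommGroup M] [Module R M]
    (N : Ideal R) : ℝ :=
  ((WithBot.unbotD 0 (Order.krullDim (Submodule R (M ⧸ (N • (⊤ : Submodule R M)))))).toNat : ℝ)



section ChainLemmas

variable {A : Type*} [Preorder A]

lemma lex_fst_le {x y : Bool ×ₗ A} (h : x ≤ y) : (ofLex x).1 ≤ (ofLex y).1 := by
  rcases Prod.Lex.le_iff.mp h with h' | ⟨h', _⟩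
  · exact h'.le
  · exact h'.le

lemma lex_snd_lt {x y : Bool ×ₗ A} (h : x < y) (he : (ofLex x).1 = (ofLex y).1) :
    (ofLex x).2 < (ofLex y).2 := by
  rcases Prod.Lex.lt_iff.mp h with h' | ⟨_, h'⟩
  · exact absurd he h'.ne
  · exact h'

lemma chainLexBool (n : ℕ) (hn : ∀ p : LTSeries A, p.length ≤ n)
    (q : LTSeries (Bool ×ₗ A)) : q.length ≤ 2 * n + 1 := by
  set k := q.length with hk
  have hmono : ∀ i j : Fin (k + 1), i ≤ j → (ofLex (q i)).1 ≤ (ofLex (q j)).1 :=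
    fun i j hij => lex_fst_le (q.monotone hij)
  by_cases hP : (ofLex (q ⟨k, by omega⟩)).1 = false
  · -- all fst are false
    have hall : ∀ i : Fin (k + 1), (ofLex (q i)).1 = false := by
      intro i
      have := hmono i ⟨k, by omega⟩ (by rw [Fin.le_def]; exact Nat.lt_succ_iff.mp i.2)
      rw [hP] at this
      exact le_bot_iff.mp this
    have h1 : k ≤ n := hn (LTSeries.mk k (fun i => (ofLex (q i)).2)
        (fun i j hij => lex_snd_lt (q.strictMono hij) ((hall i).trans (hall j).symm)))
    omega
  · have hlastt : (ofLex (q ⟨k, by omega⟩)).1 = true := by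
      revert hP; cases (ofLex (q ⟨k, by omega⟩)).1 <;> simp
    have hex : ∃ j : ℕ, ∃ hj : j < k + 1, (ofLex (q ⟨j, hj⟩)).1 = true :=
      ⟨k, by omega, hlastt⟩
    obtain ⟨htlt, httrue⟩ := Nat.find_spec hex
    set t := Nat.find hex with ht
    have hbefore : ∀ j (hj : j < k + 1), j < t → (ofLex (q ⟨j, hj⟩)).1 = false := by
      intro j hj hjt
      have h2 := Nat.find_min hex hjt
      push_neg at h2
      have h3 := h2 hj
      revert h3; cases (ofLex (q ⟨j, hj⟩)).1 <;> simp
    have hafter : ∀ j (hj : j < k + 1), t ≤ j → (ofLex (q ⟨j, hj⟩)).1 = true := by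
      intro j hj hjt
      have := hmono ⟨t, htlt⟩ ⟨j, hj⟩ (by rw [Fin.le_def]; exact hjt)
      rw [httrue] at this
      exact top_le_iff.mp this
    by_cases ht0 : t = 0
    · have hall : ∀ i : Fin (k + 1), (ofLex (q i)).1 = true := by
        intro i; have := hafter i.1 i.2 (by omega)
        simpa using this
      have h1 : k ≤ n := hn (LTSeries.mk k (fun i => (ofLex (q i)).2)
          (fun i j hij => lex_snd_lt (q.strictMono hij)
            ((hall i).trans (hall j).symm)))
      omega
    · have ht1 : 1 ≤ t := by omega
      have htk : t ≤ k := by omega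
      have hpre : t - 1 ≤ n := hn (LTSeries.mk (t - 1)
          (fun j => (ofLex (q ⟨j.1, by omega⟩)).2)
          (fun i j hij => by
            have hij' : i.1 < j.1 := hij
            refine lex_snd_lt (q.strictMono (Fin.mk_lt_mk.mpr hij')) ?_
            rw [hbefore i.1 (by omega) (by omega), hbefore j.1 (by omega) (by omega)]))
      have hsuf : k - t ≤ n := hn (LTSeries.mk (k - t)
          (fun j => (ofLex (q ⟨t + j.1, by omega⟩)).2)
          (fun i j hij => by
            have hij' : i.1 < j.1 := hij
            refine lex_snd_lt (q.strictMono (Fin.mk_lt_mk.mpr (by omega))) ?_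
            rw [hafter (t + i.1) (by omega) (by omega),
              hafter (t + j.1) (by omega) (by omega)]))
      omega

end ChainLemmas

lemma exists_chain_bound {R : Type*} [Ring R] {M : Type*} [AddCommGroup M] [Module R M]
    (h : IsFiniteLength R M) : ∃ n : ℕ, ∀ p : LTSeries (Submodule R M), p.length ≤ n := by
  induction h with
  | of_subsingleton =>
    refine ⟨0, fun p => ?_⟩
    by_contra hc
    push_neg at hc
    have h01 : (⟨0, by omega⟩ : Fin (p.length + 1)) < ⟨1, by omega⟩ := Fin.mk_lt_mk.mpr one_pos
    exact absurd (Subsingleton.elim _ _) (p.strictMono h01).ne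
  | @of_simple_quotient M _ _ N _ hN ih =>
    obtain ⟨n, hn⟩ := ih
    refine ⟨2 * n + 1, fun p => ?_⟩
    -- key dichotomy
    have hsup : ∀ X : Submodule R M, X ⊔ N = N ∨ X ⊔ N = ⊤ := by
      intro X
      rcases eq_bot_or_eq_top (Submodule.map N.mkQ (X ⊔ N)) with hb | ht
      · left
        have := congrArg (Submodule.comap N.mkQ) hb
        rwa [Submodule.comap_map_eq, Submodule.comap_bot, Submodule.ker_mkQ, sup_assoc,
          sup_idem] at this
      · right
        have := congrArg (Submodule.comap N.mkQ) ht
        rwa [Submodule.comap_map_eq, Submodule.ker_mkQ, sup_assoc, sup_idem,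
          Submodule.comap_top] at this
    classical
    let f : Submodule R M → Bool ×ₗ (Submodule R ↥N) :=
      fun P => toLex (decide (P ⊔ N = ⊤), Submodule.comap N.subtype P)
    have hf : StrictMono f := by
      intro P Q hPQ
      have hsub : Submodule.comap N.subtype P ≤ Submodule.comap N.subtype Q :=
        Submodule.comap_mono hPQ.le
      show toLex (decide (P ⊔ N = ⊤), Submodule.comap N.subtype P) <
        toLex (decide (Q ⊔ N = ⊤), Submodule.comap N.subtype Q)
      rw [Prod.Lex.lt_iff]
      by_cases hQt : Q ⊔ N = ⊤ <;> by_cases hPt : P ⊔ N = ⊤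
      · -- both top : second coordinate strictly increases
        refine Or.inr ⟨Bool.decide_congr (iff_of_true hPt hQt), lt_of_le_of_ne hsub fun hEq => ?_⟩
        have hmap := congrArg (Submodule.map N.subtype) hEq
        rw [ofLex_toLex, ofLex_toLex, Submodule.map_comap_subtype, Submodule.map_comap_subtype] at hmap
        have h2 := inf_lt_inf_of_lt_of_sup_le_sup hPQ (le_of_eq (hQt.trans hPt.symm))
        rw [inf_comm N P, inf_comm N Q] at hmap
        exact absurd hmap h2.ne
      · exact Or.inl (by rw [decide_eq_false hPt, decide_eq_true hQt]; exact Bool.false_lt_true)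
      · exact absurd (top_le_iff.mp (hPt ▸ sup_le_sup_right hPQ.le N)) hQt
      · have hPle : P ≤ N := by
          rcases hsup P with h1 | h1
          · exact le_sup_left.trans h1.le
          · exact absurd h1 hPt
        have hQle : Q ≤ N := by
          rcases hsup Q with h1 | h1
          · exact le_sup_left.trans h1.le
          · exact absurd h1 hQt
        refine Or.inr ⟨Bool.decide_congr (iff_of_false hPt hQt), lt_of_le_of_ne hsub fun hEq => ?_⟩
        have hmap := congrArg (Submodule.map N.subtype) hEq
        rw [ofLex_toLex, ofLex_toLex, Submodule.map_comap_subtype, Submodule.map_comap_subtype,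
          inf_eq_right.mpr hPle, inf_eq_right.mpr hQle] at hmap
        exact absurd hmap hPQ.ne
    have := chainLexBool n hn (p.map f hf)
    simpa using this

lemma artinian_of_torsion {R : Type*} [CommRing R] (m : Ideal R) [m.IsMaximal]
    {X : Type*} [AddCommGroup X] [Module R X] [Module.Finite R X]
    (htor : Module.IsTorsionBySet R X (m : Set R)) : IsArtinian R X := by
  letI : Module (R ⧸ m) X := htor.module
  letI : Field (R ⧸ m) := Ideal.Quotient.field m
  haveI : IsScalarTower R (R ⧸ m) X := htor.isScalarTower (S := R)
  haveI : Module.Finite (R ⧸ m) X := by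
    obtain ⟨s, hs⟩ := Module.Finite.fg_top (R := R) (M := X)
    refine ⟨⟨s, eq_top_iff.mpr fun x _ => ?_⟩⟩
    have hx : x ∈ Submodule.span R (s : Set X) := hs ▸ Submodule.mem_top
    exact Submodule.span_le_restrictScalars R (R ⧸ m) (s : Set X) hx
  haveI hart : IsArtinian (R ⧸ m) X := isArtinian_of_fg_of_artinian'
  let emb : Submodule R X ↪o Submodule (R ⧸ m) X :=
    { toFun := fun p =>
        { carrier := p
          add_mem' := fun ha hb => p.add_mem ha hb
          zero_mem' := p.zero_mem
          smul_mem' := by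
            intro c x hx
            obtain ⟨r, rfl⟩ := Ideal.Quotient.mk_surjective c
            have : (Ideal.Quotient.mk m r) • x = r • x := htor.mk_smul r x
            rw [this]
            exact p.smul_mem r hx }
      inj' := fun p q h => by
        apply SetLike.coe_injective
        exact congrArg (SetLike.coe (A := Submodule (R ⧸ m) X)) h
      map_rel_iff' := Iff.rfl }
  exact ⟨emb.wellFounded hart.wf⟩

lemma artinian_quot_pow {R : Type*} [CommRing R] [IsLocalRing R] [IsNoetherianRing R]
    {M : Type*} [AddCommGroup M] [Module R M] [Module.Finite R M] (k : ℕ) :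
    IsArtinian R (M ⧸ ((IsLocalRing.maximalIdeal R ^ k) • (⊤ : Submodule R M))) := by
  induction k with
  | zero =>
    have hsub : Subsingleton (M ⧸ ((IsLocalRing.maximalIdeal R ^ 0) • (⊤ : Submodule R M))) := by
      rw [Submodule.Quotient.subsingleton_iff, pow_zero, Ideal.one_eq_top,
        Submodule.top_smul]
    exact isArtinian_of_finite
  | succ k ih =>
    set m : Ideal R := IsLocalRing.maximalIdeal R with hm
    set A : Submodule R M := (m ^ (k + 1)) • ⊤ with hA
    set B : Submodule R M := (m ^ k) • ⊤ with hB
    have hAB : A ≤ B := Submodule.smul_mono (Ideal.pow_le_pow_right k.le_succ) le_rfl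
    rw [isArtinian_iff_submodule_quotient (B.map A.mkQ)]
    constructor
    · have hNfin : Module.Finite R ↥(B.map A.mkQ) := by
        haveI : IsNoetherian R (M ⧸ A) := inferInstance
        exact Module.Finite.iff_fg.mpr (IsNoetherian.noetherian _)
      refine artinian_of_torsion m ?_
      intro x a
      obtain ⟨b, hb, hbx⟩ := Submodule.mem_map.mp x.2
      apply Subtype.ext
      show (a : R) • (x : M ⧸ A) = 0
      rw [← hbx, Submodule.mkQ_apply, ← Submodule.Quotient.mk_smul,
        Submodule.Quotient.mk_eq_zero]
      have hmem : (a : R) • b ∈ m • B := Submodule.smul_mem_smul a.2 hb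
      have : m • B = A := by
        rw [hB, hA, ← Submodule.smul_assoc, smul_eq_mul, ← pow_succ']
      exact this ▸ hmem
    · haveI := ih
      exact isArtinian_of_linearEquiv (Submodule.quotientQuotientEquivQuotient A B hAB).symm

lemma artinian_quot_of_primary {R : Type*} [CommRing R] [IsLocalRing R] [IsNoetherianRing R]
    {M : Type*} [AddCommGroup M] [Module R M] [Module.Finite R M] {F : Ideal R}
    (hF : IsLocalRing.maximalIdeal R ≤ F.radical) :
    IsArtinian R (M ⧸ F • (⊤ : Submodule R M)) := by
  obtain ⟨k, hk⟩ := Ideal.exists_pow_le_of_le_radical_of_fg hF (IsNoetherian.noetherian _)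
  haveI := artinian_quot_pow (R := R) (M := M) k
  have hle : (IsLocalRing.maximalIdeal R ^ k) • (⊤ : Submodule R M) ≤ F • ⊤ :=
    Submodule.smul_mono hk le_rfl
  refine isArtinian_of_surjective _
    (Submodule.mapQ _ _ LinearMap.id (by simpa using hle)) fun x => ?_
  obtain ⟨y, rfl⟩ := Submodule.mkQ_surjective _ x
  exact ⟨Submodule.mkQ _ y, by simp [Submodule.mapQ_apply]⟩

lemma quotLen_nonneg (R M : Type*) [CommRing R] [AddCommGroup M] [Module R M] (N : Ideal R) :
    0 ≤ quotLen R M N := Nat.cast_nonneg _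

lemma quotLen_anti {R M : Type*} [CommRing R] [IsNoetherianRing R] [AddCommGroup M] [Module R M]
    [Module.Finite R M] {N N' : Ideal R} (h : N ≤ N')
    (hart : IsArtinian R (M ⧸ N • (⊤ : Submodule R M))) :
    quotLen R M N' ≤ quotLen R M N := by
  set A : Submodule R M := N • ⊤ with hA
  set B : Submodule R M := N' • ⊤ with hB
  have hAB : A ≤ B := Submodule.smul_mono h le_rfl
  let π : (M ⧸ A) →ₗ[R] (M ⧸ B) := Submodule.mapQ A B LinearMap.id (by simpa using hAB)
  have hπ : Function.Surjective π := by
    intro x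
    obtain ⟨y, rfl⟩ := Submodule.mkQ_surjective _ x
    exact ⟨Submodule.mkQ _ y, by simp [π, Submodule.mapQ_apply]⟩
  have hcm : Monotone (Submodule.comap π) := fun _ _ hpq => Submodule.comap_mono hpq
  have hsm : StrictMono (Submodule.comap π) :=
    hcm.strictMono_of_injective (Submodule.comap_injective_of_surjective hπ)
  have hkd : Order.krullDim (Submodule R (M ⧸ B)) ≤ Order.krullDim (Submodule R (M ⧸ A)) :=
    Order.krullDim_le_of_strictMono _ hsm
  haveI : IsNoetherian R (M ⧸ A) := inferInstance
  obtain ⟨n, hn⟩ := exists_chain_bound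
    (isFiniteLength_iff_isNoetherian_isArtinian.mpr ⟨inferInstance, hart⟩)
  have hb : Order.krullDim (Submodule R (M ⧸ A)) ≤ ((n : ℕ∞) : WithBot ℕ∞) := by
    rw [Order.krullDim_eq_iSup_length, WithBot.coe_le_coe]
    apply iSup_le
    intro p
    exact_mod_cast hn p
  unfold quotLen
  rw [Nat.cast_le]
  apply ENat.toNat_le_toNat
  · -- unbot' mono
    rcases hu : Order.krullDim (Submodule R (M ⧸ B)) with _ | x
    · exact zero_le
    · rw [hu] at hkd
      rcases hv : Order.krullDim (Submodule R (M ⧸ A)) with _ | y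
      · rw [hv] at hkd
        exact (WithBot.not_coe_le_bot x hkd).elim
      · rw [hv] at hkd
        exact WithBot.coe_le_coe.mp hkd
  · -- RHS ≠ ⊤
    rcases hv : Order.krullDim (Submodule R (M ⧸ A)) with _ | y
    · show (0 : ℕ∞) ≠ ⊤
      simp
    · rw [hv] at hb
      have : y ≤ (n : ℕ∞) := WithBot.coe_le_coe.mp hb
      exact (this.trans_lt (by exact_mod_cast ENat.coe_lt_top n)).ne

theorem h_le_min_multiplicities
    {R M : Type*} [CommRing R] [IsLocalRing R] [IsNoetherianRing R]
    [AddCommGroup M] [Module R M] [Module.Finite R M]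
    (p : ℕ) [Fact p.Prime] [CharP R p]
    (d : ℕ) (hdim : ringKrullDim R = d)
    (I J : Ideal R)
    (hI : I.radical = IsLocalRing.maximalIdeal R)
    (hJ : J.radical = IsLocalRing.maximalIdeal R)
    (s : ℝ) (hs : 0 < s)
    (eI eHK h : ℝ)
    (heI : Tendsto (fun n : ℕ => (d.factorial : ℝ) * quotLen R M (I ^ n) / (n : ℝ) ^ d)
      atTop (nhds eI))
    (heHK : Tendsto (fun e : ℕ => quotLen R M (frobPow J (p ^ e)) / (p : ℝ) ^ (e * d))
      atTop (nhds eHK))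
    (hh : Tendsto (fun e : ℕ =>
        quotLen R M (I ^ (⌈s * (p : ℝ) ^ e⌉.toNat) + frobPow J (p ^ e)) /
          (p : ℝ) ^ (e * d))
      atTop (nhds h)) :
    h ≤ min (s ^ d / d.factorial * eI) eHK := by
  have hp : 1 < p := (Fact.out : p.Prime).one_lt
  have hp1 : (1 : ℝ) < p := by exact_mod_cast hp
  have hppos : (0 : ℝ) < p := lt_trans one_pos hp1
  set m := IsLocalRing.maximalIdeal R with hm
  set c : ℕ → ℕ := fun e => (⌈s * (p : ℝ) ^ e⌉).toNat with hc
  have hFrad : ∀ e : ℕ, m ≤ (frobPow J (p ^ e)).radical := by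
    intro e
    have h1 : J ≤ (frobPow J (p ^ e)).radical := fun y hy =>
      Ideal.mem_radical_of_pow_mem (Ideal.le_radical (Ideal.subset_span ⟨y, hy, rfl⟩))
    calc m = J.radical := hJ.symm
      _ ≤ (frobPow J (p ^ e)).radical.radical := Ideal.radical_mono h1
      _ = (frobPow J (p ^ e)).radical := (frobPow J (p ^ e)).radical_idem
  have hcepos : ∀ e : ℕ, 0 < ⌈s * (p : ℝ) ^ e⌉ := by
    intro e
    exact Int.ceil_pos.mpr (by positivity)
  have hne1 : ∀ e : ℕ, c e ≠ 0 := by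
    intro e
    simp only [hc, ne_eq, Int.toNat_eq_zero, not_le]
    exact hcepos e
  have hIrad : ∀ e : ℕ, m ≤ (I ^ (c e)).radical := by
    intro e
    rw [Ideal.radical_pow I (hne1 e), hI]
  have key1 : ∀ e, quotLen R M (I ^ (c e) + frobPow J (p ^ e)) ≤
      quotLen R M (frobPow J (p ^ e)) := fun e =>
    quotLen_anti (by rw [Submodule.add_eq_sup]; exact le_sup_right)
      (artinian_quot_of_primary (hFrad e))
  have key2 : ∀ e, quotLen R M (I ^ (c e) + frobPow J (p ^ e)) ≤
      quotLen R M (I ^ (c e)) := fun e =>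
    quotLen_anti (by rw [Submodule.add_eq_sup]; exact le_sup_left)
      (artinian_quot_of_primary (hIrad e))
  refine le_min ?_ ?_
  · -- Hilbert–Samuel side
    have hcast : ∀ e : ℕ, (c e : ℝ) = ((⌈s * (p : ℝ) ^ e⌉ : ℤ) : ℝ) := by
      intro e
      have h0 := Int.toNat_of_nonneg (hcepos e).le
      calc (c e : ℝ) = ((((⌈s * (p : ℝ) ^ e⌉.toNat : ℕ) : ℤ)) : ℝ) := by push_cast; rfl
        _ = ((⌈s * (p : ℝ) ^ e⌉ : ℤ) : ℝ) := by rw [h0]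
    have hclb : ∀ e, s * (p : ℝ) ^ e ≤ (c e : ℝ) := by
      intro e
      rw [hcast e]
      exact Int.le_ceil _
    have hcub : ∀ e, (c e : ℝ) ≤ s * (p : ℝ) ^ e + 1 := by
      intro e
      rw [hcast e]
      exact (Int.ceil_lt_add_one _).le
    have hcpos : ∀ e, (0 : ℝ) < (c e : ℝ) := fun e => lt_of_lt_of_le (by positivity) (hclb e)
    have hctop : Tendsto c atTop atTop := by
      rw [← tendsto_natCast_atTop_iff (R := ℝ)]
      exact tendsto_atTop_mono hclb
        ((tendsto_pow_atTop_atTop_of_one_lt hp1).const_mul_atTop hs)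
    have hg : Tendsto (fun e => (d.factorial : ℝ) * quotLen R M (I ^ (c e)) / (c e : ℝ) ^ d)
        atTop (nhds eI) := heI.comp hctop
    have hratio : Tendsto (fun e => (c e : ℝ) / (p : ℝ) ^ e) atTop (nhds s) := by
      have hub : Tendsto (fun e : ℕ => s + (1 / (p : ℝ)) ^ e) atTop (nhds (s + 0)) :=
        tendsto_const_nhds.add (tendsto_pow_atTop_nhds_zero_of_lt_one (by positivity)
          (by rw [div_lt_one hppos]; exact hp1))
      rw [add_zero] at hub
      refine tendsto_of_tendsto_of_tendsto_of_le_of_le tendsto_const_nhds hub ?_ ?_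
      · intro e
        rw [le_div_iff₀ (by positivity)]
        exact hclb e
      · intro e
        rw [div_le_iff₀ (by positivity)]
        have hrw : (s + (1 / (p : ℝ)) ^ e) * (p : ℝ) ^ e = s * (p : ℝ) ^ e + 1 := by
          field_simp
          rw [add_mul, one_div, inv_pow, inv_mul_cancel₀ (pow_ne_zero e hppos.ne')]
        rw [hrw]
        exact hcub e
    have hfinal : Tendsto (fun e => quotLen R M (I ^ (c e)) / (p : ℝ) ^ (e * d)) atTop
        (nhds (s ^ d / d.factorial * eI)) := by
      have h1 : Tendsto (fun e =>
          ((d.factorial : ℝ) * quotLen R M (I ^ (c e)) / (c e : ℝ) ^ d) *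
            ((c e : ℝ) / (p : ℝ) ^ e) ^ d / (d.factorial : ℝ)) atTop
          (nhds (eI * s ^ d / (d.factorial : ℝ))) :=
        (hg.mul (hratio.pow d)).div_const _
      have heq : ∀ e : ℕ,
          ((d.factorial : ℝ) * quotLen R M (I ^ (c e)) / (c e : ℝ) ^ d) *
            ((c e : ℝ) / (p : ℝ) ^ e) ^ d / (d.factorial : ℝ) =
          quotLen R M (I ^ (c e)) / (p : ℝ) ^ (e * d) := by
        intro e
        have hc0 : (c e : ℝ) ≠ 0 := (hcpos e).ne'
        have hp0 : (p : ℝ) ≠ 0 := hppos.ne'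
        have hd0 : (d.factorial : ℝ) ≠ 0 := by
          exact_mod_cast d.factorial_pos.ne'
        rw [pow_mul]
        field_simp
        rw [mul_assoc, ← mul_pow, div_mul_cancel₀ _ (pow_ne_zero e hp0)]
      rw [show s ^ d / (d.factorial : ℝ) * eI = eI * s ^ d / (d.factorial : ℝ) by ring]
      exact Tendsto.congr heq h1
    refine le_of_tendsto_of_tendsto' hh hfinal fun e => ?_
    exact (div_le_div_iff_of_pos_right (by positivity)).mpr (key2 e)
  · refine le_of_tendsto_of_tendsto' hh heHK fun e => ?_
    exact (div_le_div_iff_of_pos_right (by positivity)).mpr (key1 e)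
end

section
/- Let R = k[[x,y]] with k a field of characteristic p > 0, and let I = (x^3, y^3). Then x^2y^2 lies in the weak s-closure of I for 1 < s ≤ 4/3; i.e., there exists c ≠ 0 in R with c·(x^2y^2)^{p^e} ∈ I^{⌈s·p^e⌉} + I^{[p^e]} for all e ≥ 0. -/
open MvPowerSeries

lemma mv_X_ne_zero (k : Type*) [Field k] (i : Fin 2) :
    (X i : MvPowerSeries (Fin 2) k) ≠ 0 := by
  intro h
  have := MvPowerSeries.coeff_X_pow (R := k) (Finsupp.single i 1) i 1
  rw [pow_one, h] at this
  simp at this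

theorem x2y2_mem_weak_s_closure (k : Type*) [Field k] (p : ℕ) [Fact p.Prime] [CharP k p]
    (s : ℝ) (hs1 : 1 < s) (hs2 : s ≤ 4 / 3) :
    ∃ c : MvPowerSeries (Fin 2) k, c ≠ 0 ∧ ∀ e : ℕ,
      c * ((X 0 : MvPowerSeries (Fin 2) k) ^ 2 * X 1 ^ 2) ^ (p ^ e) ∈
        (Ideal.span {(X 0 : MvPowerSeries (Fin 2) k) ^ 3, X 1 ^ 3}) ^
            (⌈s * (p : ℝ) ^ e⌉.toNat) +
          frobPow (Ideal.span {(X 0 : MvPowerSeries (Fin 2) k) ^ 3, X 1 ^ 3}) (p ^ e) := by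
  set X0 : MvPowerSeries (Fin 2) k := X 0
  set X1 : MvPowerSeries (Fin 2) k := X 1
  set I : Ideal (MvPowerSeries (Fin 2) k) := Ideal.span {X0 ^ 3, X1 ^ 3}
  have hX0 : X0 ^ 3 ∈ I := Ideal.subset_span (by simp)
  have hX1 : X1 ^ 3 ∈ I := Ideal.subset_span (by simp)
  refine ⟨X0 ^ 2 * X1 ^ 2, ?_, ?_⟩
  · exact mul_ne_zero (pow_ne_zero _ (mv_X_ne_zero k 0)) (pow_ne_zero _ (mv_X_ne_zero k 1))
  intro e
  set q : ℕ := p ^ e with hq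
  have hq1 : 1 ≤ q := Nat.one_le_pow _ _ (Fact.out : p.Prime).pos
  set N : ℕ := (⌈s * (p : ℝ) ^ e⌉).toNat with hN
  set M : ℕ := (2 * q + 2) / 3 with hM
  -- N ≤ 2 * M
  have hqR : ((q : ℝ)) = (p : ℝ) ^ e := by rw [hq]; push_cast; ring
  have h6M : 4 * q ≤ 6 * M := by omega
  have hceil : (⌈s * (p : ℝ) ^ e⌉ : ℤ) ≤ (2 * M : ℤ) := by
    rw [Int.ceil_le]
    push_cast
    rw [← hqR]
    have h1 : s * (q : ℝ) ≤ (4 / 3) * q := by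
      apply mul_le_mul_of_nonneg_right hs2 (by positivity)
    have h2 : (4 / 3 : ℝ) * q ≤ 2 * M := by
      rw [div_mul_eq_mul_div, div_le_iff₀ (by norm_num)]
      have : (4 : ℝ) * q ≤ 6 * M := by exact_mod_cast h6M
      linarith
    linarith
  have hNM : N ≤ 2 * M := by
    rw [hN]
    omega
  have h3M : 3 * M ≤ 2 * q + 2 := by omega
  set a : ℕ := min M N with ha
  set b : ℕ := N - a with hb
  have hab : a + b = N := by omega
  have haM : a ≤ M := min_le_left _ _
  have hbM : b ≤ M := by omega
  have h3a : 3 * a ≤ 2 * q + 2 := by omega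
  have h3b : 3 * b ≤ 2 * q + 2 := by omega
  -- the ring identity
  have key : (X0 ^ 2 * X1 ^ 2) * (X0 ^ 2 * X1 ^ 2) ^ q =
      (X0 ^ (2 * q + 2 - 3 * a) * X1 ^ (2 * q + 2 - 3 * b)) *
        ((X0 ^ 3) ^ a * (X1 ^ 3) ^ b) := by
    rw [mul_pow, ← pow_mul, ← pow_mul, ← pow_mul, ← pow_mul]
    rw [mul_mul_mul_comm, ← pow_add, ← pow_add, mul_mul_mul_comm, ← pow_add, ← pow_add]
    congr 1 <;> congr 1 <;> omega
  rw [key]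
  have hmem : (X0 ^ 3) ^ a * (X1 ^ 3) ^ b ∈ I ^ N := by
    rw [← hab, pow_add]
    exact Ideal.mul_mem_mul (Ideal.pow_mem_pow hX0 a) (Ideal.pow_mem_pow hX1 b)
  have : (X0 ^ (2 * q + 2 - 3 * a) * X1 ^ (2 * q + 2 - 3 * b)) *
      ((X0 ^ 3) ^ a * (X1 ^ 3) ^ b) ∈ I ^ N := Ideal.mul_mem_left _ _ hmem
  exact Submodule.mem_sup_left this
end

section
/- Let R = k[[x,y]] with k of characteristic p > 0, let 1 ≤ s < s' ≤ 2, choose a positive integer n with n > 2/(s'−s), and let I = (x^{2n}, y^{2n}). Then x^{⌈sn⌉}y^{⌈sn⌉} lies in the weak s-closure of I but not in the weak s'-closure of I. -/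
open MvPowerSeries Filter

/-- `z` is in the weak `s`-closure of `I`: there is `c ≠ 0` with
`c * z^{p^e} ∈ I^{⌈s p^e⌉} + I^{[p^e]}` for all `e ≫ 0`.  (In a domain, `c ≠ 0` is
equivalent to `c` avoiding all minimal primes.) -/
def memWeakSClosure {R : Type*} [CommRing R] (p : ℕ) (s : ℝ) (I : Ideal R) (z : R) :
    Prop :=
  ∃ c : R, c ≠ 0 ∧ ∀ᶠ e : ℕ in atTop,
    c * z ^ (p ^ e) ∈ I ^ (⌈s * (p : ℝ) ^ e⌉.toNat) + frobPow I (p ^ e)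

open Finsupp
section Aux

variable {k : Type*} [Field k]

lemma myCoeffMulNeZero {f g : MvPowerSeries (Fin 2) k} {d : Fin 2 →₀ ℕ}
    (h : coeff d (f * g) ≠ 0) :
    ∃ d1 d2, d1 + d2 = d ∧ coeff d1 f ≠ 0 ∧ coeff d2 g ≠ 0 := by
  rw [coeff_mul] at h
  obtain ⟨x, hx, hne⟩ := Finset.exists_ne_zero_of_sum_ne_zero h
  exact ⟨x.1, x.2, Finset.HasAntidiagonal.mem_antidiagonal.mp hx, left_ne_zero_of_mul hne,
    right_ne_zero_of_mul hne⟩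

lemma mySpanDom {S : Set (MvPowerSeries (Fin 2) k)} {P : (Fin 2 →₀ ℕ) → Prop}
    (habs : ∀ d1 d2, P d2 → P (d1 + d2))
    (hS : ∀ g ∈ S, ∀ d, coeff d g ≠ 0 → P d)
    {f} (hf : f ∈ Ideal.span S) : ∀ d, coeff d f ≠ 0 → P d := by
  refine Submodule.span_induction (p := fun f _ => ∀ d, coeff d f ≠ 0 → P d) hS ?_ ?_ ?_ hf
  · intro d hd; simp at hd
  · intro x y _ _ hx hy d hd
    rw [map_add] at hd
    by_cases h0 : coeff d x = 0
    · exact hy d (by simpa [h0] using hd)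
    · exact hx d h0
  · intro r x _ hx d hd
    rw [smul_eq_mul] at hd
    obtain ⟨d1, d2, hsum, _, h2⟩ := myCoeffMulNeZero hd
    exact hsum ▸ habs d1 d2 (hx d2 h2)

lemma myXpowDom (n : ℕ) (i : Fin 2) {d : Fin 2 →₀ ℕ}
    (h : coeff d ((X i : MvPowerSeries (Fin 2) k) ^ n) ≠ 0) : d = single i n := by
  rw [X_pow_eq, coeff_monomial] at h
  by_contra hne
  rw [if_neg hne] at h
  exact h rfl

lemma myPowSpanDom (n m : ℕ) {f : MvPowerSeries (Fin 2) k}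
    (hf : f ∈ (Ideal.span {(X 0 : MvPowerSeries (Fin 2) k) ^ (2 * n), X 1 ^ (2 * n)}) ^ m) :
    ∀ d, coeff d f ≠ 0 → ∃ i j, i + j = m ∧ 2 * n * i ≤ d 0 ∧ 2 * n * j ≤ d 1 := by
  induction m generalizing f with
  | zero => exact fun d _ => ⟨0, 0, rfl, by simp, by simp⟩
  | succ m ih =>
    rw [pow_succ] at hf
    refine Submodule.mul_induction_on hf ?_ ?_
    · intro a ha b hb d hd
      obtain ⟨d1, d2, hsum, h1, h2⟩ := myCoeffMulNeZero hd
      obtain ⟨i, j, hij, hi, hj⟩ := ih ha d1 h1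
      have hb2 : 2 * n ≤ d2 0 ∨ 2 * n ≤ d2 1 := by
        refine mySpanDom (P := fun d => 2 * n ≤ d 0 ∨ 2 * n ≤ d 1) ?_ ?_ hb d2 h2
        · intro e1 e2 he
          rcases he with h | h
          · exact Or.inl (by simp only [Finsupp.add_apply]; omega)
          · exact Or.inr (by simp only [Finsupp.add_apply]; omega)
        · rintro g (rfl | rfl) d hd
          · left; rw [myXpowDom _ _ hd]; simp
          · right; rw [myXpowDom _ _ hd]; simp
      subst hsum
      rcases hb2 with h | h
      · refine ⟨i + 1, j, by omega, ?_, ?_⟩ <;> simp only [Finsupp.add_apply] <;>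
          [nlinarith; nlinarith]
      · refine ⟨i, j + 1, by omega, ?_, ?_⟩ <;> simp only [Finsupp.add_apply] <;>
          [nlinarith; nlinarith]
    · intro x y hx hy d hd
      rw [map_add] at hd
      by_cases h0 : coeff d x = 0
      · exact hy d (by simpa [h0] using hd)
      · exact hx d h0

variable (p : ℕ) [Fact p.Prime] [CharP k p]

instance : CharP (MvPowerSeries (Fin 2) k) p := by
  refine charP_of_injective_ringHom (f := C (σ := Fin 2) (R := k)) ?_ p
  intro a b h
  simpa using congrArg (constantCoeff (σ := Fin 2) (R := k)) h

lemma myFrobPowLe (e n : ℕ) :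
    frobPow (Ideal.span {(X 0 : MvPowerSeries (Fin 2) k) ^ (2 * n), X 1 ^ (2 * n)}) (p ^ e) ≤
      Ideal.span {(X 0 : MvPowerSeries (Fin 2) k) ^ (2 * n * p ^ e), X 1 ^ (2 * n * p ^ e)} := by
  rw [frobPow, Ideal.span_le]
  rintro _ ⟨f, hf, rfl⟩
  obtain ⟨a, b, rfl⟩ := Ideal.mem_span_pair.mp hf
  simp only
  rw [add_pow_char_pow, mul_pow, mul_pow, ← pow_mul, ← pow_mul]
  exact Ideal.add_mem _
    (Ideal.mul_mem_left _ _ (Ideal.subset_span (by simp)))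
    (Ideal.mul_mem_left _ _ (Ideal.subset_span (by simp)))

end Aux

lemma myCeilToNatCast (x : ℝ) (hx : 0 ≤ x) : ((⌈x⌉.toNat : ℕ) : ℝ) = (⌈x⌉ : ℝ) := by
  rw [← Int.cast_natCast, Int.toNat_of_nonneg (Int.ceil_nonneg hx)]


set_option maxHeartbeats 1000000 in
theorem weak_s_closure_distinct (k : Type*) [Field k] (p : ℕ) [Fact p.Prime] [CharP k p]
    (s s' : ℝ) (h1 : 1 ≤ s) (hss' : s < s') (h2 : s' ≤ 2)
    (n : ℕ) (hn : 0 < n) (hn2 : 2 / (s' - s) < (n : ℝ)) :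
    memWeakSClosure p s
        (Ideal.span {(X 0 : MvPowerSeries (Fin 2) k) ^ (2 * n), X 1 ^ (2 * n)})
        ((X 0 : MvPowerSeries (Fin 2) k) ^ (⌈s * (n : ℝ)⌉.toNat) *
          X 1 ^ (⌈s * (n : ℝ)⌉.toNat)) ∧
      ¬ memWeakSClosure p s'
        (Ideal.span {(X 0 : MvPowerSeries (Fin 2) k) ^ (2 * n), X 1 ^ (2 * n)})
        ((X 0 : MvPowerSeries (Fin 2) k) ^ (⌈s * (n : ℝ)⌉.toNat) *
          X 1 ^ (⌈s * (n : ℝ)⌉.toNat)) := by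
  have hprime := Fact.out (p := p.Prime)
  set R := MvPowerSeries (Fin 2) k
  set I : Ideal R := Ideal.span {(X 0 : R) ^ (2 * n), X 1 ^ (2 * n)} with hI
  set a : ℕ := ⌈s * (n : ℝ)⌉.toNat with haDef
  -- real facts
  have hnR : (0 : ℝ) < n := by exact_mod_cast hn
  have hs's : (0 : ℝ) < s' - s := by linarith
  have hgap : (2 : ℝ) < (s' - s) * n := by
    rw [div_lt_iff₀ hs's] at hn2; linarith
  have haR1 : s * n ≤ (a : ℝ) := by
    rw [haDef, myCeilToNatCast _ (by positivity)]; exact Int.le_ceil _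
  have haR2 : (a : ℝ) < s * n + 1 := by
    rw [haDef, myCeilToNatCast _ (by positivity)]; exact Int.ceil_lt_add_one _
  have ha2n : a + 2 ≤ 2 * n := by
    have : (a : ℝ) + 1 < 2 * n := by nlinarith
    have : (a : ℕ) + 1 < 2 * n := by exact_mod_cast this
    omega
  constructor
  · -- positive part
    refine ⟨(X 0 : R) ^ (4 * n) * X 1 ^ (4 * n), ?_, Eventually.of_forall fun e => ?_⟩
    · intro h0
      have h1' : coeff (single 0 (4 * n) + single 1 (4 * n))
          ((X 0 : R) ^ (4 * n) * X 1 ^ (4 * n)) = 1 := by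
        rw [X_pow_eq, X_pow_eq, monomial_mul_monomial, one_mul, coeff_monomial_same]
      rw [h0] at h1'
      simp at h1'
    · set q : ℕ := p ^ e with hqDef
      set m : ℕ := ⌈s * (p : ℝ) ^ e⌉.toNat with hmDef
      have hq1 : 1 ≤ q := Nat.one_le_pow _ _ hprime.pos
      have hqR : ((q : ℕ) : ℝ) = (p : ℝ) ^ e := by rw [hqDef]; push_cast; ring
      have hmq : (m : ℝ) < s * q + 1 := by
        rw [hmDef, myCeilToNatCast _ (by positivity), hqR]
        exact Int.ceil_lt_add_one _
      have hnm : n * m ≤ a * q + n := by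
        have hq0 : (0 : ℝ) ≤ (q : ℝ) := by positivity
        have : (n : ℝ) * m ≤ (a : ℝ) * q + n := by nlinarith
        exact_mod_cast this
      set i : ℕ := (m + 1) / 2 with hiDef
      set j : ℕ := m / 2 with hjDef
      have hij : i + j = m := by omega
      have h2i : 2 * i ≤ m + 1 := by omega
      have h2j : 2 * j ≤ m := by omega
      have hiA : 2 * n * i ≤ 4 * n + a * q := by nlinarith
      have hjA : 2 * n * j ≤ 4 * n + a * q := by nlinarith
      have hu : (X 0 : R) ^ (2 * n) ∈ I := Ideal.subset_span (by simp)
      have hv : (X 1 : R) ^ (2 * n) ∈ I := Ideal.subset_span (by simp)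
      have hmm : ((X 0 : R) ^ (2 * n)) ^ i * ((X 1 : R) ^ (2 * n)) ^ j ∈ I ^ m := by
        rw [← hij, pow_add]
        exact Ideal.mul_mem_mul (Ideal.pow_mem_pow hu i) (Ideal.pow_mem_pow hv j)
      have e0 : 2 * n * i + (4 * n + a * q - 2 * n * i) = 4 * n + a * q := by omega
      have e1 : 2 * n * j + (4 * n + a * q - 2 * n * j) = 4 * n + a * q := by omega
      have key : ((X 0 : R) ^ (2 * n)) ^ i * ((X 1 : R) ^ (2 * n)) ^ j *
          ((X 0 : R) ^ (4 * n + a * q - 2 * n * i) * (X 1 : R) ^ (4 * n + a * q - 2 * n * j)) =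
          (X 0 : R) ^ (4 * n + a * q) * (X 1 : R) ^ (4 * n + a * q) := by
        rw [← pow_mul, ← pow_mul, mul_mul_mul_comm, ← pow_add, ← pow_add, e0, e1]
      have h2' : (X 0 : R) ^ (4 * n + a * q) * (X 1 : R) ^ (4 * n + a * q) ∈ I ^ m :=
        key ▸ Ideal.mul_mem_right _ _ hmm
      have hcz : (X 0 : R) ^ (4 * n) * X 1 ^ (4 * n) * ((X 0 : R) ^ a * X 1 ^ a) ^ q =
          (X 0 : R) ^ (4 * n + a * q) * (X 1 : R) ^ (4 * n + a * q) := by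
        rw [mul_pow, ← pow_mul, ← pow_mul, pow_add, pow_add]; ring
      rw [hcz]
      exact Submodule.mem_sup_left h2'
  · -- negative part
    rintro ⟨c, hc, hev⟩
    obtain ⟨w, hw⟩ : ∃ w, coeff w c ≠ 0 := by
      by_contra h
      push_neg at h
      exact hc (MvPowerSeries.ext fun d => by simpa using h d)
    obtain ⟨e0, he0⟩ := eventually_atTop.mp hev
    set N : ℕ := w 0 + w 1 + 1 with hN
    set e : ℕ := e0 + N with heDef
    have hqN : N < p ^ e := by
      calc N < 2 ^ N := Nat.lt_two_pow_self
        _ ≤ 2 ^ e := Nat.pow_le_pow_right (by norm_num) (by omega)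
        _ ≤ p ^ e := Nat.pow_le_pow_left hprime.two_le e
    set q : ℕ := p ^ e with hqDef
    have hq1 : 1 ≤ q := Nat.one_le_pow _ _ hprime.pos
    have hmem := he0 e (by omega)
    set m' : ℕ := ⌈s' * (p : ℝ) ^ e⌉.toNat with hm'Def
    have hqR : ((q : ℕ) : ℝ) = (p : ℝ) ^ e := by rw [hqDef]; push_cast; ring
    have hs'0 : (0 : ℝ) < s' := by linarith
    have hm'R : s' * (q : ℝ) ≤ (m' : ℝ) := by
      rw [hm'Def, myCeilToNatCast _ (mul_nonneg hs'0.le (by positivity)), hqR]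
      exact Int.le_ceil _
    -- the distinguished coefficient
    set D : Fin 2 →₀ ℕ := single 0 (a * q) + single 1 (a * q) with hD
    have hzq : ((X 0 : R) ^ a * X 1 ^ a) ^ q = monomial D 1 := by
      rw [mul_pow, ← pow_mul, ← pow_mul, X_pow_eq, X_pow_eq, monomial_mul_monomial, one_mul]
    have hcoeff : coeff (w + D) (c * ((X 0 : R) ^ a * X 1 ^ a) ^ q) = coeff w c := by
      rw [hzq, coeff_add_mul_monomial, mul_one]
    have hd0 : (w + D) 0 = w 0 + a * q := by
      simp [hD, Finsupp.add_apply, Finsupp.single_apply]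
    have hd1 : (w + D) 1 = w 1 + a * q := by
      simp [hD, Finsupp.add_apply, Finsupp.single_apply]
    obtain ⟨y, hy, z', hz', hyz⟩ := Submodule.mem_sup.mp hmem
    have hcases : coeff (w + D) y ≠ 0 ∨ coeff (w + D) z' ≠ 0 := by
      by_contra hcon
      push_neg at hcon
      apply hw
      have := congrArg (coeff (w + D)) hyz
      rw [map_add, hcon.1, hcon.2, hcoeff] at this
      simpa using this.symm
    have h2q : a * q + 2 * q ≤ 2 * n * q := by
      calc a * q + 2 * q = (a + 2) * q := by ring
        _ ≤ (2 * n) * q := Nat.mul_le_mul_right q ha2n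
    rcases hcases with hcy | hcz'
    · obtain ⟨i, j, hij, hi, hj⟩ := myPowSpanDom n m' hy (w + D) hcy
      rw [hd0] at hi
      rw [hd1] at hj
      have hsum : 2 * n * m' ≤ w 0 + w 1 + 2 * (a * q) := by
        have : 2 * n * i + 2 * n * j = 2 * n * m' := by rw [← hij]; ring
        omega
      have hsumR : 2 * (n : ℝ) * m' ≤ (w 0 : ℝ) + w 1 + 2 * (a * q) := by
        exact_mod_cast hsum
      have hwqR : ((w 0 : ℝ) + w 1) + 1 ≤ (q : ℝ) := by
        have : N ≤ q := hqN.le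
        rw [hN] at this
        exact_mod_cast this
      have hq0R : (0 : ℝ) < q := by exact_mod_cast hq1
      nlinarith [mul_le_mul_of_nonneg_left hm'R (by positivity : (0 : ℝ) ≤ 2 * (n : ℝ)),
        mul_lt_mul_of_pos_right haR2 hq0R, mul_lt_mul_of_pos_right hgap hq0R]
    · have hdom := mySpanDom (P := fun d => 2 * n * q ≤ d 0 ∨ 2 * n * q ≤ d 1)
        (by intro e1 e2 he
            rcases he with h | h
            · exact Or.inl (by simp only [Finsupp.add_apply]; omega)
            · exact Or.inr (by simp only [Finsupp.add_apply]; omega))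
        (by rintro g (rfl | rfl) d hd
            · left; rw [myXpowDom _ _ hd]; simp [hqDef]
            · right; rw [myXpowDom _ _ hd]; simp [hqDef])
        (myFrobPowLe p e n hz') (w + D) hcz'
      simp only [hd0, hd1] at hdom
      have hNq : N < q := hqN
      rw [hN] at hNq
      rcases hdom with h | h <;> omega
end

section
/- Let S = σ^∨ ∩ ℤ^d be the lattice points of a full-dimensional rational cone σ^∨ ⊆ ℝ^d containing no line, let I = (x^{u_1},...,x^{u_n}) be a monomial ideal of k[[S]], and write Hull I for the convex hull of Exp I = {v ∈ S : x^v ∈ I}. Then for all integers m ≥ 1: ((m+n)·Hull I) ∩ ℤ^d ⊆ Exp(I^m) ⊆ (m·Hull I) ∩ ℤ^d, and for all e ≥ 0, Exp(I^{[p^e]}) = (p^e·Exp I + σ^∨) ∩ ℤ^d. -/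
open Set Pointwise

/-! We formalize the combinatorics of monomial ideals in a toric ring `k[[S]]`,
`S = σ^∨ ∩ ℤ^d`: monomials are identified with their exponent vectors, so for
`I = (x^{u_1}, ..., x^{u_n})` we have
`Exp (I^m) = {v ∈ ℤ^d : ∃ a ∈ ℕ^n, ∑ a_i = m, v ∈ ∑ a_i u_i + σ^∨}` and
`Exp (I^{[p^e]}) = {v ∈ ℤ^d : ∃ i, v ∈ p^e u_i + σ^∨}`. -/

variable (d : ℕ)

/-- The lattice `ℤ^d ⊆ ℝ^d`. -/
def latticePts : Set (Fin d → ℝ) := {v | ∀ j, ∃ z : ℤ, v j = (z : ℝ)}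

/-- If `m ≤ ∑ f i`, we can pick `a ≤ f` pointwise with `∑ a i = m`. -/
lemma aux_exists_le_sum : ∀ {n : ℕ} (f : Fin n → ℕ) (m : ℕ),
    m ≤ ∑ i, f i → ∃ a : Fin n → ℕ, (∀ i, a i ≤ f i) ∧ ∑ i, a i = m := by
  intro n
  induction n with
  | zero =>
    intro f m h
    simp only [Finset.univ_eq_empty, Finset.sum_empty, Nat.le_zero] at h
    exact ⟨0, fun i => i.elim0, by simp [h]⟩
  | succ n ih =>
    intro f m h
    rw [Fin.sum_univ_succ] at h
    set c := min (f 0) m with hc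
    have hrest : m - c ≤ ∑ i : Fin n, f i.succ := by omega
    obtain ⟨a', ha'le, ha'sum⟩ := ih (fun i => f i.succ) (m - c) hrest
    refine ⟨Fin.cons c a', ?_, ?_⟩
    · intro i
      refine Fin.cases ?_ ?_ i
      · simpa [hc] using Nat.min_le_left _ _
      · intro j; simpa using ha'le j
    · rw [Fin.sum_univ_succ]
      simp only [Fin.cons_zero, Fin.cons_succ]
      rw [ha'sum]; omega

theorem toric_exp_lemma
    (p : ℕ) (hp : p.Prime)
    (N : ℕ) (w : Fin N → (Fin d → ℝ)) (hw : ∀ i, w i ∈ latticePts d)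
    (σ : Set (Fin d → ℝ))
    -- `σ` is the rational cone generated by the integer vectors `w i`
    (hσ : σ = {x | ∃ c : Fin N → ℝ, (∀ i, 0 ≤ c i) ∧ x = ∑ i, c i • w i})
    -- full-dimensional
    (hfull : Submodule.span ℝ σ = ⊤)
    -- contains no line through the origin
    (hsalient : ∀ x ∈ σ, -x ∈ σ → x = 0)
    (n : ℕ) (u : Fin n → (Fin d → ℝ))
    (hu : ∀ i, u i ∈ σ ∩ latticePts d)
    -- exponent sets of `I`, of `I^m`, and of `I^{[q]}`
    (ExpI : Set (Fin d → ℝ))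
    (hExpI : ExpI = {v | v ∈ latticePts d ∧ ∃ i, v - u i ∈ σ})
    (ExpPow : ℕ → Set (Fin d → ℝ))
    (hExpPow : ∀ m, ExpPow m =
      {v | v ∈ latticePts d ∧
        ∃ a : Fin n → ℕ, (∑ i, a i) = m ∧ v - (∑ i, (a i : ℝ) • u i) ∈ σ})
    (ExpFrob : ℕ → Set (Fin d → ℝ))
    (hExpFrob : ∀ e, ExpFrob e =
      {v | v ∈ latticePts d ∧ ∃ i, v - ((p : ℝ) ^ e) • u i ∈ σ})
    (HullI : Set (Fin d → ℝ)) (hHull : HullI = convexHull ℝ ExpI) :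
    (∀ m : ℕ, 1 ≤ m →
      (((m + n : ℕ) : ℝ) • HullI ∩ latticePts d ⊆ ExpPow m ∧
        ExpPow m ⊆ ((m : ℝ) • HullI) ∩ latticePts d)) ∧
    (∀ e : ℕ, ExpFrob e = (((p : ℝ) ^ e • ExpI) + σ) ∩ latticePts d) := by
  classical
  -- basic cone facts
  have hzero : (0 : Fin d → ℝ) ∈ σ := by
    rw [hσ]; exact ⟨0, fun i => le_rfl, by simp⟩
  have hadd : ∀ x ∈ σ, ∀ y ∈ σ, x + y ∈ σ := by
    intro x hx y hy
    rw [hσ] at hx hy ⊢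
    obtain ⟨c, hc, rfl⟩ := hx
    obtain ⟨c', hc', rfl⟩ := hy
    exact ⟨c + c', fun i => add_nonneg (hc i) (hc' i), by
      rw [← Finset.sum_add_distrib]
      exact Finset.sum_congr rfl fun i _ => by simp [add_smul]⟩
  have hsmul : ∀ (t : ℝ), 0 ≤ t → ∀ x ∈ σ, t • x ∈ σ := by
    intro t ht x hx
    rw [hσ] at hx ⊢
    obtain ⟨c, hc, rfl⟩ := hx
    refine ⟨fun i => t * c i, fun i => mul_nonneg ht (hc i), ?_⟩
    rw [Finset.smul_sum]
    exact Finset.sum_congr rfl fun i _ => by rw [smul_smul]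
  have hsum : ∀ {ι : Type} (t : Finset ι) (f : ι → Fin d → ℝ),
      (∀ j ∈ t, f j ∈ σ) → ∑ j ∈ t, f j ∈ σ := by
    intro ι t f hf
    exact Finset.sum_induction f (· ∈ σ) (fun a b ha hb => hadd a ha b hb) hzero hf
  -- lattice facts
  have hlat_sub : ∀ x ∈ latticePts d, ∀ y ∈ latticePts d, x - y ∈ latticePts d := by
    intro x hx y hy j
    obtain ⟨zx, hzx⟩ := hx j
    obtain ⟨zy, hzy⟩ := hy j
    exact ⟨zx - zy, by simp [Pi.sub_apply, hzx, hzy]⟩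
  have hlat_add : ∀ x ∈ latticePts d, ∀ y ∈ latticePts d, x + y ∈ latticePts d := by
    intro x hx y hy j
    obtain ⟨zx, hzx⟩ := hx j
    obtain ⟨zy, hzy⟩ := hy j
    exact ⟨zx + zy, by simp [Pi.add_apply, hzx, hzy]⟩
  have hlat_sum : ∀ a : Fin n → ℕ, (∑ i, (a i : ℝ) • u i) ∈ latticePts d := by
    intro a j
    have : ∀ i, ∃ z : ℤ, u i j = (z : ℝ) := fun i => (hu i).2 j
    choose z hz using this
    refine ⟨∑ i, (a i : ℤ) * z i, ?_⟩
    rw [Finset.sum_apply]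
    push_cast
    exact Finset.sum_congr rfl fun i _ => by simp [hz]
  have huExpI : ∀ i, u i ∈ ExpI := by
    intro i
    rw [hExpI]
    exact ⟨(hu i).2, i, by simpa using hzero⟩
  constructor
  · intro m hm
    constructor
    · -- (m+n) • Hull I ∩ ℤ^d ⊆ Exp (I^m)
      rintro v ⟨⟨h, hhHull, rfl⟩, hvlat⟩
      rw [hHull, convexHull_eq] at hhHull
      obtain ⟨ι, t, wt, z, hw0, hw1, hzmem, hcm⟩ := hhHull
      have htne : t.Nonempty := by
        rcases Finset.eq_empty_or_nonempty t with rfl | h'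
        · simp at hw1
        · exact h'
      obtain ⟨j0, hj0⟩ := htne
      have hz0 := hzmem j0 hj0
      rw [hExpI] at hz0
      obtain ⟨-, i0, -⟩ := hz0
      -- choose for each j an index idx j with z j - u (idx j) ∈ σ
      have hidx : ∀ j, ∃ i, j ∈ t → z j - u i ∈ σ := by
        intro j
        by_cases hj : j ∈ t
        · have := hzmem j hj
          rw [hExpI] at this
          obtain ⟨-, i, hi⟩ := this
          exact ⟨i, fun _ => hi⟩
        · exact ⟨i0, fun hc => absurd hc hj⟩
      choose idx hidxs using hidx
      set M : ℝ := ((m + n : ℕ) : ℝ) with hM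
      have hM0 : 0 ≤ M := Nat.cast_nonneg _
      rw [Finset.centerMass_eq_of_sum_1 _ _ hw1] at hcm
      have hveq : M • h = ∑ j ∈ t, (M * wt j) • z j := by
        rw [← hcm, Finset.smul_sum]
        exact Finset.sum_congr rfl fun j _ => by rw [smul_smul]
      set b : Fin n → ℝ := fun i => ∑ j ∈ t.filter (fun j => idx j = i), M * wt j with hb
      have hb0 : ∀ i, 0 ≤ b i := by
        intro i
        exact Finset.sum_nonneg fun j hj =>
          mul_nonneg hM0 (hw0 j (Finset.mem_filter.mp hj).1)
      have hbsum : ∑ i, b i = M := by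
        rw [hb]
        rw [Finset.sum_fiberwise t (fun j => idx j) (fun j => M * wt j)]
        rw [← Finset.mul_sum, hw1, mul_one]
      set f : Fin n → ℕ := fun i => ⌊b i⌋₊ with hf
      have hfb : ∀ i, (f i : ℝ) ≤ b i := fun i => Nat.floor_le (hb0 i)
      have hfs : m ≤ ∑ i, f i := by
        have h1 : M ≤ ∑ i, ((f i : ℝ) + 1) := by
          rw [← hbsum]
          exact Finset.sum_le_sum fun i _ => (Nat.lt_floor_add_one (b i)).le
        rw [Finset.sum_add_distrib] at h1
        simp only [Finset.sum_const, Finset.card_univ, Fintype.card_fin, nsmul_eq_mul,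
          mul_one] at h1
        have h2 : ((m : ℝ) + n) ≤ (∑ i, (f i : ℝ)) + n := by
          rw [hM] at h1; push_cast at h1 ⊢; linarith
        have h3 : (m : ℝ) ≤ ∑ i, (f i : ℝ) := by linarith
        have h4 : (m : ℝ) ≤ ((∑ i, f i : ℕ) : ℝ) := by push_cast; exact h3
        exact_mod_cast h4
      obtain ⟨a, hale, hasum⟩ := aux_exists_le_sum f m hfs
      rw [hExpPow]
      refine ⟨hvlat, a, hasum, ?_⟩
      have hab : ∀ i, (a i : ℝ) ≤ b i :=
        fun i => le_trans (by exact_mod_cast hale i) (hfb i)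
      have hgroup : ∑ j ∈ t, (M * wt j) • u (idx j) = ∑ i, b i • u i := by
        rw [← Finset.sum_fiberwise t (fun j => idx j) (fun j => (M * wt j) • u (idx j))]
        refine Finset.sum_congr rfl fun i _ => ?_
        rw [hb, Finset.sum_smul]
        refine Finset.sum_congr rfl fun j hj => ?_
        rw [(Finset.mem_filter.mp hj).2]
      have key : M • h - ∑ i, (a i : ℝ) • u i =
          (∑ j ∈ t, (M * wt j) • (z j - u (idx j))) + ∑ i, ((b i - a i)) • u i := by
        simp only [smul_sub, sub_smul, Finset.sum_sub_distrib]
        rw [hgroup, ← hveq]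
        abel
      rw [key]
      refine hadd _ (hsum t _ fun j hj =>
        hsmul _ (mul_nonneg hM0 (hw0 j hj)) _ (hidxs j hj)) _
        (hsum Finset.univ _ fun i _ =>
          hsmul _ (by linarith [hab i]) _ (hu i).1)
    · -- Exp (I^m) ⊆ m • Hull I ∩ ℤ^d
      intro v hv
      rw [hExpPow] at hv
      obtain ⟨hvlat, a, hasum, hs⟩ := hv
      refine ⟨?_, hvlat⟩
      have hm0 : (0 : ℝ) < (m : ℝ) := by exact_mod_cast hm
      obtain ⟨i0, hi0⟩ : ∃ i0, a i0 ≠ 0 := by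
        by_contra hc
        push_neg at hc
        simp only [hc, Finset.sum_const_zero] at hasum
        omega
      set s : Fin d → ℝ := v - ∑ i, (a i : ℝ) • u i with hsdef
      have hslat : s ∈ latticePts d := hlat_sub v hvlat _ (hlat_sum a)
      have hzpt : u i0 + s ∈ ExpI := by
        rw [hExpI]
        refine ⟨hlat_add _ (hu i0).2 _ hslat, i0, ?_⟩
        simpa using hs
      -- convex combination over Option (Fin n)
      set W : Option (Fin n) → ℝ := fun o => Option.casesOn o (1 / m)
        (fun i => ((a i : ℝ) - if i = i0 then 1 else 0) / m) with hW
      set P : Option (Fin n) → (Fin d → ℝ) := fun o => Option.casesOn o (u i0 + s) u with hP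
      have hW0 : ∀ o ∈ Finset.univ, 0 ≤ W o := by
        rintro (_ | i) -
        · positivity
        · simp only [hW]
          refine div_nonneg ?_ hm0.le
          split
          · rename_i hii; subst hii
            have : (1 : ℝ) ≤ (a i : ℝ) := by
              exact_mod_cast Nat.one_le_iff_ne_zero.mpr hi0
            linarith
          · simp
      have hasumR : ∑ i, (a i : ℝ) = (m : ℝ) := by
        rw [← hasum]; push_cast; rfl
      have hmne : (m : ℝ) ≠ 0 := hm0.ne'
      have hW1 : ∑ o, W o = 1 := by
        rw [Fintype.sum_option]
        simp only [hW]
        rw [← Finset.sum_div, Finset.sum_sub_distrib, hasumR]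
        have : ∑ i, (if i = i0 then (1 : ℝ) else 0) = 1 := by
          simp [Finset.sum_ite_eq']
        rw [this]
        field_simp
        ring
      have hPmem : ∀ o ∈ Finset.univ, P o ∈ convexHull ℝ ExpI := by
        rintro (_ | i) -
        · exact subset_convexHull ℝ ExpI hzpt
        · exact subset_convexHull ℝ ExpI (huExpI i)
      have hconv : ∑ o, W o • P o ∈ convexHull ℝ ExpI :=
        (convex_convexHull ℝ ExpI).sum_mem hW0 hW1 hPmem
      have hvrep : (m : ℝ) • ∑ o, W o • P o = v := by
        rw [Finset.smul_sum, Fintype.sum_option]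
        simp only [hW, hP, smul_smul]
        have hcoef : ∀ c : ℝ, (m : ℝ) * (c / m) = c := fun c => by field_simp
        simp only [hcoef, one_smul, sub_smul, ite_smul, zero_smul,
          Finset.sum_sub_distrib, Finset.sum_ite_eq', Finset.mem_univ, if_true]
        rw [hsdef]
        abel
      rw [hHull]
      exact ⟨_, hconv, hvrep⟩
  · -- Frobenius powers
    intro e
    have hq0 : (0 : ℝ) ≤ (p : ℝ) ^ e := by positivity
    ext v
    simp only [hExpFrob, Set.mem_inter_iff, Set.mem_setOf_eq, Set.mem_add, Set.mem_smul_set]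
    constructor
    · rintro ⟨hvlat, i, hi⟩
      refine ⟨⟨_, ⟨u i, huExpI i, rfl⟩, _, hi, by abel⟩, hvlat⟩
    · rintro ⟨⟨_, ⟨x, hx, rfl⟩, s, hsσ, rfl⟩, hvlat⟩
      rw [hExpI] at hx
      obtain ⟨hxlat, i, hi⟩ := hx
      refine ⟨hvlat, i, ?_⟩
      have : (p : ℝ) ^ e • x + s - (p : ℝ) ^ e • u i = (p : ℝ) ^ e • (x - u i) + s := by
        rw [smul_sub]; abel
      rw [this]
      exact hadd _ (hsmul _ hq0 _ hi) _ hsσ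
end

section
/- For the A_n singularity R = k[[x, y, x^{-1}y^{n+1}]] (k of characteristic p > 0, n ≥ 1) with maximal monomial ideal m, and 0 < s ≤ 1, the volume of the region σ^∨ \ (s·Hull m ∪ (Exp m + σ^∨)) in ℝ² equals s², where σ^∨ = cone((1,0),(−1,n+1)). -/
open Set Pointwise MeasureTheory intervalIntegral


lemma ofReal_max0 (a : ℝ) : ENNReal.ofReal (max a 0) = ENNReal.ofReal a := by
  rcases le_total a 0 with h | h
  · rw [max_eq_right h, ENNReal.ofReal_zero, eq_comm, ENNReal.ofReal_eq_zero]; exact h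
  · rw [max_eq_left h]

lemma vol_lemma (s : ℝ) (h0 : 0 < s) :
    (∫⁻ x : ℝ, ENNReal.ofReal (s - |x|)) = ENNReal.ofReal (s ^ 2) := by
  set g : ℝ → ℝ := fun x => max (s - |x|) 0 with hg
  have hg_cont : Continuous g := (continuous_const.sub continuous_abs).max continuous_const
  have hgz : ∀ x, x ∉ Ioc (-s) s → g x = 0 := by
    intro x hx
    simp only [mem_Ioc, not_and_or, not_lt, not_le] at hx
    have : s - |x| ≤ 0 := by
      rcases hx with h | h
      · have : s ≤ -x := by linarith
        have := neg_le_abs x; linarith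
      · have := le_abs_self x; linarith
    simpa [hg] using max_eq_right this
  have hsupp : HasCompactSupport g := by
    apply HasCompactSupport.intro (isCompact_Icc (a := -s) (b := s))
    intro x hx
    apply hgz
    intro hx'; exact hx (Ioc_subset_Icc_self hx')
  have hint : Integrable g := hg_cont.integrable_of_hasCompactSupport hsupp
  have h1 : (∫⁻ x : ℝ, ENNReal.ofReal (s - |x|)) = ∫⁻ x : ℝ, ENNReal.ofReal (g x) := by
    refine lintegral_congr fun x => ?_
    rw [hg]; exact (ofReal_max0 _).symm
  rw [h1, ← ofReal_integral_eq_lintegral_ofReal hint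
    (Filter.Eventually.of_forall fun x => le_max_right _ _)]
  congr 1
  have h2 : (∫ x, g x) = ∫ x in Ioc (-s) s, g x :=
    (setIntegral_eq_integral_of_forall_compl_eq_zero hgz).symm
  rw [h2, ← intervalIntegral.integral_of_le (by linarith : -s ≤ s)]
  have h3 : ∫ x in (-s)..s, g x = (∫ x in (-s)..(0:ℝ), g x) + ∫ x in (0:ℝ)..s, g x :=
    (intervalIntegral.integral_add_adjacent_intervals
      (hg_cont.intervalIntegrable _ _) (hg_cont.intervalIntegrable _ _)).symm
  have h4 : ∫ x in (-s)..(0:ℝ), g x = ∫ x in (-s)..(0:ℝ), (s + x) := by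
    apply intervalIntegral.integral_congr
    intro x hx
    rw [uIcc_of_le (by linarith)] at hx
    have h5 : |x| = -x := abs_of_nonpos hx.2
    have : (0:ℝ) ≤ s + x := by linarith [hx.1]
    simp [hg, h5]; linarith
  have h6 : ∫ x in (0:ℝ)..s, g x = ∫ x in (0:ℝ)..s, (s - x) := by
    apply intervalIntegral.integral_congr
    intro x hx
    rw [uIcc_of_le (by linarith)] at hx
    have h5 : |x| = x := abs_of_nonneg hx.1
    have : (0:ℝ) ≤ s - x := by linarith [hx.2]
    simp [hg, h5]; linarith
  rw [h3, h4, h6]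
  have ha : ∫ x in (-s)..(0:ℝ), (s + x) = s ^ 2 / 2 := by
    rw [intervalIntegral.integral_add intervalIntegrable_const
      (intervalIntegral.intervalIntegrable_id), intervalIntegral.integral_const, integral_id]
    simp
    ring
  have hb : ∫ x in (0:ℝ)..s, (s - x) = s ^ 2 / 2 := by
    rw [intervalIntegral.integral_sub intervalIntegrable_const
      (intervalIntegral.intervalIntegrable_id), intervalIntegral.integral_const, integral_id]
    simp
    ring
  rw [ha, hb]; ring

lemma volume_E (n : ℕ) (hn : 1 ≤ n) (s : ℝ) (h0 : 0 < s) :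
    volume {p : ℝ × ℝ | (0 ≤ p.2 ∧ 0 ≤ ((n:ℝ)+1)*p.1+p.2) ∧
      (p.1+p.2 < s ∨ (n:ℝ)*p.1+p.2 < s)} = ENNReal.ofReal (s ^ 2) := by
  have hN : (1:ℝ) ≤ (n:ℝ) := by exact_mod_cast hn
  set N := (n:ℝ)
  set E : Set (ℝ × ℝ) := {p | (0 ≤ p.2 ∧ 0 ≤ (N+1)*p.1+p.2) ∧
      (p.1+p.2 < s ∨ N*p.1+p.2 < s)} with hE
  have hmeas : MeasurableSet E := by
    apply MeasurableSet.inter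
    · apply MeasurableSet.inter
      · exact measurableSet_le measurable_const measurable_snd
      · exact measurableSet_le measurable_const
          ((measurable_fst.const_mul _).add measurable_snd)
    · apply MeasurableSet.union
      · exact measurableSet_lt (measurable_fst.add measurable_snd) measurable_const
      · exact measurableSet_lt ((measurable_fst.const_mul _).add measurable_snd)
          measurable_const
  have hslice : ∀ x : ℝ, Prod.mk x ⁻¹' E =
      Ico (max 0 (-(N+1)*x)) (max (s - x) (s - N*x)) := by
    intro x
    ext y
    simp only [hE, mem_preimage, mem_setOf_eq, mem_Ico, max_le_iff, lt_max_iff]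
    constructor
    · rintro ⟨⟨h1, h2⟩, h3⟩
      refine ⟨⟨h1, by linarith⟩, ?_⟩
      rcases h3 with h | h
      · left; linarith
      · right; linarith
    · rintro ⟨⟨h1, h2⟩, h3⟩
      refine ⟨⟨h1, by linarith⟩, ?_⟩
      rcases h3 with h | h
      · left; linarith
      · right; linarith
  have hUL : ∀ x : ℝ, max (s - x) (s - N*x) - max 0 (-(N+1)*x) = s - |x| := by
    intro x
    rcases le_total 0 x with h | h
    · rw [abs_of_nonneg h, max_eq_left (by nlinarith), max_eq_left (by nlinarith)]
      ring
    · rw [abs_of_nonpos h, max_eq_right (by nlinarith), max_eq_right (by nlinarith)]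
      ring
  rw [show (volume : Measure (ℝ × ℝ)) = (volume : Measure ℝ).prod volume from
    (Measure.volume_eq_prod ..), Measure.prod_apply hmeas]
  calc (∫⁻ x, volume (Prod.mk x ⁻¹' E))
      = ∫⁻ x : ℝ, ENNReal.ofReal (s - |x|) := by
        refine lintegral_congr fun x => ?_
        rw [hslice x, Real.volume_Ico, hUL x]
    _ = ENNReal.ofReal (s ^ 2) := vol_lemma s h0



lemma int_lemma (n : ℕ) (hn : 1 ≤ n) (z₁ z₂ : ℤ) (h2 : 0 ≤ z₂)
    (h1 : 0 ≤ ((n : ℤ) + 1) * z₁ + z₂) (hne : ¬(z₁ = 0 ∧ z₂ = 0)) :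
    1 ≤ z₁ + z₂ ∧ 1 ≤ (n : ℤ) * z₁ + z₂ := by
  have hn' : (1 : ℤ) ≤ (n : ℤ) := by exact_mod_cast hn
  rcases lt_trichotomy z₁ 0 with h | h | h
  · have hz : z₁ ≤ -1 := by omega
    constructor <;> nlinarith
  · subst h; simp at hne ⊢; omega
  · constructor <;> nlinarith


set_option maxHeartbeats 2000000 in
/-- For the `A_n` singularity `k[[x, y, x⁻¹y^{n+1}]]`, viewed torically via the cone
`σ^∨ = cone((1,0), (-1, n+1)) ⊆ ℝ²`: the volume of
`σ^∨ \ (s · Hull m ∪ (Exp m + σ^∨))` equals `s²` for `0 < s ≤ 1`, where `Exp m` is the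
set of nonzero lattice points of `σ^∨` and `Hull m` its convex hull. -/
theorem An_volume_small_s (n : ℕ) (hn : 1 ≤ n) (s : ℝ) (h0 : 0 < s) (h1 : s ≤ 1)
    (σ Expm Hullm : Set (ℝ × ℝ))
    (hσ : σ = {x | ∃ a b : ℝ, 0 ≤ a ∧ 0 ≤ b ∧
      x = a • ((1 : ℝ), (0 : ℝ)) + b • ((-1 : ℝ), ((n : ℝ) + 1))})
    (hExp : Expm = {v | v ∈ σ ∧ (∃ z₁ z₂ : ℤ, v = ((z₁ : ℝ), (z₂ : ℝ))) ∧ v ≠ 0})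
    (hHull : Hullm = convexHull ℝ Expm) :
    volume (σ \ (s • Hullm ∪ (Expm + σ))) = ENNReal.ofReal (s ^ 2) := by
  have hN : (1:ℝ) ≤ (n:ℝ) := by exact_mod_cast hn
  set N := (n:ℝ) with hNdef
  have hN0 : (0:ℝ) < N + 1 := by linarith
  have hNpos : (0:ℝ) < N := by linarith
  -- σ membership characterization
  have memσ : ∀ p : ℝ × ℝ, p ∈ σ ↔ 0 ≤ p.2 ∧ 0 ≤ (N+1)*p.1+p.2 := by
    intro p
    rw [hσ]
    constructor
    · rintro ⟨a, b, ha, hb, rfl⟩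
      simp only [Prod.smul_mk, Prod.mk_add_mk, smul_eq_mul]
      constructor <;> nlinarith
    · rintro ⟨h1', h2'⟩
      refine ⟨((N+1)*p.1+p.2)/(N+1), p.2/(N+1), by positivity, by positivity, ?_⟩
      simp only [Prod.smul_mk, Prod.mk_add_mk, smul_eq_mul]
      rw [Prod.ext_iff]
      constructor <;> field_simp <;> ring
  -- lattice points of σ are in K
  have expK : ∀ v : ℝ × ℝ, v ∈ Expm →
      0 ≤ v.2 ∧ 0 ≤ (N+1)*v.1+v.2 ∧ 1 ≤ v.1+v.2 ∧ 1 ≤ N*v.1+v.2 := by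
    intro v hv
    rw [hExp] at hv
    obtain ⟨hvσ, ⟨z₁, z₂, hz⟩, hvne⟩ := hv
    rw [memσ] at hvσ
    subst hz
    simp only at hvσ ⊢
    obtain ⟨hv2, hv1⟩ := hvσ
    have hz2 : (0:ℤ) ≤ z₂ := by exact_mod_cast hv2
    have hz1 : (0:ℤ) ≤ ((n:ℤ)+1)*z₁+z₂ := by
      have : (0:ℝ) ≤ (((n:ℤ)+1)*z₁+z₂ : ℤ) := by push_cast; convert hv1 using 2
      exact_mod_cast this
    have hne' : ¬(z₁ = 0 ∧ z₂ = 0) := by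
      rintro ⟨rfl, rfl⟩
      exact hvne (by norm_num [Prod.ext_iff])
    obtain ⟨ha, hb⟩ := int_lemma n hn z₁ z₂ hz2 hz1 hne'
    refine ⟨hv2, hv1, ?_, ?_⟩
    · exact_mod_cast ha
    · have : ((n:ℤ)*z₁+z₂ : ℤ) ≥ 1 := hb
      have h2 : ((1:ℝ)) ≤ (((n:ℤ)*z₁+z₂ : ℤ) : ℝ) := by exact_mod_cast this
      push_cast at h2
      convert h2 using 2
  -- adding a cone element to an Exp point stays in the hull
  have addCone : ∀ v : ℝ × ℝ, v ∈ Expm → ∀ a b : ℝ, 0 ≤ a → 0 ≤ b →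
      v + (a - b, b*(N+1)) ∈ Hullm := by
    intro v hv a b ha hb
    have hvK := expK v hv
    rw [hExp] at hv
    obtain ⟨hvσ, ⟨z₁, z₂, hz⟩, hvne⟩ := hv
    rw [memσ] at hvσ
    obtain ⟨M₀, hM₀⟩ := exists_nat_ge (a + b)
    set Mr : ℝ := (M₀ : ℝ) + 1 with hMr
    have hMpos : (0:ℝ) < Mr := by positivity
    have hab : a + b ≤ Mr := by simp only [hMr]; linarith
    -- the three lattice points
    set w₁ : ℝ × ℝ := v + (Mr, 0) with hw1
    set w₂ : ℝ × ℝ := v + (-Mr, Mr*(N+1)) with hw2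
    have hw1E : w₁ ∈ Expm := by
      rw [hExp]
      refine ⟨(memσ _).2 ⟨?_, ?_⟩, ⟨z₁ + (M₀+1 : ℤ), z₂, ?_⟩, ?_⟩
      · simpa [hw1] using hvσ.1
      · simp only [hw1, Prod.fst_add, Prod.snd_add]
        nlinarith [hvσ.2]
      · rw [hw1, hz]
        rw [Prod.ext_iff]
        constructor <;> push_cast <;> simp [hMr]
      · intro h
        have h1' : w₁.1 + w₁.2 = 0 := by rw [h]; simp
        have : w₁.1 + w₁.2 = v.1 + v.2 + Mr := by simp [hw1]; ring
        linarith [hvK.2.2.1]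
    have hw2E : w₂ ∈ Expm := by
      rw [hExp]
      refine ⟨(memσ _).2 ⟨?_, ?_⟩, ⟨z₁ - (M₀+1 : ℤ), z₂ + (M₀+1 : ℤ)*((n:ℤ)+1), ?_⟩, ?_⟩
      · simp only [hw2, Prod.snd_add]
        nlinarith [hvσ.1]
      · simp only [hw2, Prod.fst_add, Prod.snd_add]
        have := hvσ.2
        nlinarith
      · rw [hw2, hz]
        rw [Prod.ext_iff]
        constructor <;> push_cast <;> simp [hMr] <;> ring <;> exact Or.inl hNdef
      · intro h
        have h1' : w₂.1 + w₂.2 = 0 := by rw [h]; simp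
        have h2' : w₂.1 + w₂.2 = v.1 + v.2 + Mr*N := by simp [hw2]; ring
        nlinarith [hvK.2.2.1]
    rw [hHull]
    have hconv := convex_convexHull ℝ Expm
    have hmem : ∀ i : Fin 3, (![v, w₁, w₂] i) ∈ convexHull ℝ Expm := by
      intro i
      fin_cases i
      · exact subset_convexHull ℝ Expm (by rw [hExp]; exact ⟨(memσ v).2 hvσ, ⟨z₁, z₂, hz⟩, hvne⟩)
      · exact subset_convexHull ℝ Expm hw1E
      · exact subset_convexHull ℝ Expm hw2E
    have hwnn : ∀ i : Fin 3, 0 ≤ (![1 - a/Mr - b/Mr, a/Mr, b/Mr] i) := by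
      have key : a/Mr + b/Mr ≤ 1 := by
        rw [← add_div, div_le_one hMpos]; exact hab
      have k1 : (0:ℝ) ≤ 1 - a/Mr - b/Mr := by linarith
      have k2 : (0:ℝ) ≤ a/Mr := by positivity
      have k3 : (0:ℝ) ≤ b/Mr := by positivity
      intro i
      fin_cases i
      · simpa using k1
      · simpa using k2
      · simpa using k3
    have hsum : ∑ i : Fin 3, (![1 - a/Mr - b/Mr, a/Mr, b/Mr] i) = 1 := by
      rw [Fin.sum_univ_three]
      simp only [Matrix.cons_val_zero, Matrix.cons_val_one, Matrix.head_cons,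
        Matrix.cons_val_two, Matrix.tail_cons]
      ring
    have hcomb := hconv.sum_mem (fun i _ => hwnn i) hsum (fun i _ => hmem i)
    have heq : ∑ i : Fin 3, (![1 - a/Mr - b/Mr, a/Mr, b/Mr] i) • (![v, w₁, w₂] i)
        = v + (a - b, b*(N+1)) := by
      simp only [Fin.sum_univ_three, Matrix.cons_val_zero, Matrix.cons_val_one,
        Matrix.head_cons, Matrix.cons_val_two, Matrix.tail_cons]
      rw [hw1, hw2, Prod.ext_iff]
      simp only [Prod.smul_fst, Prod.smul_snd, Prod.fst_add, Prod.snd_add,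
        Prod.mk_add_mk, smul_eq_mul]
      constructor <;> field_simp <;> ring
    rw [← heq]
    exact hcomb
  -- Hull ⊆ K
  have hullK : ∀ q ∈ Hullm, 0 ≤ q.2 ∧ 0 ≤ (N+1)*q.1+q.2 ∧ 1 ≤ q.1+q.2 ∧ 1 ≤ N*q.1+q.2 := by
    have hsub : convexHull ℝ Expm ⊆
        {q : ℝ × ℝ | 0 ≤ q.2 ∧ 0 ≤ (N+1)*q.1+q.2 ∧ 1 ≤ q.1+q.2 ∧ 1 ≤ N*q.1+q.2} := by
      apply convexHull_min
      · intro v hv; exact expK v hv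
      · intro p hp q hq α β hα hβ hαβ
        simp only [mem_setOf_eq] at hp hq ⊢
        simp only [Prod.fst_add, Prod.snd_add, Prod.smul_fst, Prod.smul_snd, smul_eq_mul]
        obtain ⟨p1, p2, p3, p4⟩ := hp
        obtain ⟨q1, q2, q3, q4⟩ := hq
        refine ⟨add_nonneg (mul_nonneg hα p1) (mul_nonneg hβ q1), ?_, ?_, ?_⟩
        · nlinarith [mul_nonneg hα p2, mul_nonneg hβ q2]
        · nlinarith [mul_le_mul_of_nonneg_left p3 hα, mul_le_mul_of_nonneg_left q3 hβ]
        · nlinarith [mul_le_mul_of_nonneg_left p4 hα, mul_le_mul_of_nonneg_left q4 hβ]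
    intro q hq
    rw [hHull] at hq
    exact hsub hq
  -- K ⊆ Hull
  have h01 : ((0:ℝ),(1:ℝ)) ∈ Expm := by
    rw [hExp]
    refine ⟨(memσ _).2 ⟨by norm_num, by norm_num⟩, ⟨0, 1, by norm_num⟩, ?_⟩
    simp [Prod.ext_iff]
  have h10 : ((1:ℝ),(0:ℝ)) ∈ Expm := by
    rw [hExp]
    refine ⟨(memσ _).2 ⟨by norm_num, by norm_num; linarith⟩, ⟨1, 0, by norm_num⟩, ?_⟩
    simp [Prod.ext_iff]
  have hm1 : ((-1:ℝ), N+1) ∈ Expm := by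
    rw [hExp]
    refine ⟨(memσ _).2 ⟨by norm_num <;> linarith, by norm_num <;> linarith⟩, ⟨-1, (n:ℤ)+1, ?_⟩, ?_⟩
    · rw [Prod.ext_iff]; constructor <;> push_cast <;> norm_num <;> exact hNdef
    · simp [Prod.ext_iff]
  have KHull : ∀ q : ℝ × ℝ, 0 ≤ q.2 → 0 ≤ (N+1)*q.1+q.2 → 1 ≤ q.1+q.2 → 1 ≤ N*q.1+q.2 →
      q ∈ Hullm := by
    intro q h2 hc hs1 hs2
    have hconv : Convex ℝ (convexHull ℝ Expm) := convex_convexHull ℝ Expm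
    rcases le_total q.2 1 with hq2 | hq2
    · -- lower part: combination of (1,0) and (0,1) pushed by a•(1,0)
      have haa : 0 ≤ q.1 + q.2 - 1 := by linarith
      have m1 := addCone ((1:ℝ),(0:ℝ)) h10 (q.1 + q.2 - 1) 0 haa le_rfl
      have m2 := addCone ((0:ℝ),(1:ℝ)) h01 (q.1 + q.2 - 1) 0 haa le_rfl
      rw [hHull] at m1 m2 ⊢
      have hcomb := hconv m1 m2 (by linarith : (0:ℝ) ≤ 1 - q.2) h2 (by ring)
      convert hcomb using 1
      rw [Prod.ext_iff]
      simp only [Prod.fst_add, Prod.snd_add, Prod.smul_fst, Prod.smul_snd,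
        Prod.mk_add_mk, smul_eq_mul]
      constructor <;> ring_nf <;> nlinarith [sq_nonneg q.2]
    · -- upper part
      set t : ℝ := max 0 ((N+1-q.2)/N) with htdef
      set β : ℝ := (q.2 - t)/(N+1) with hβdef
      have ht0 : 0 ≤ t := le_max_left _ _
      have ht1 : t ≤ 1 := by
        apply max_le (by norm_num)
        rw [div_le_one hNpos]; linarith
      have htN : (N+1-q.2)/N ≤ t := le_max_right _ _
      have htN' : N+1-q.2 ≤ N*t := by
        rw [div_le_iff₀ hNpos] at htN; linarith [htN]
      have hβ0 : 0 ≤ β := by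
        apply div_nonneg _ (le_of_lt hN0); linarith
      have hbb : 0 ≤ β - (1-t) := by
        have : (1-t) ≤ (q.2 - t)/(N+1) := by
          rw [le_div_iff₀ hN0]; nlinarith
        simpa [hβdef] using by linarith [this]
      have ht2 : t ≤ (N+1)*q.1+q.2 := by
        apply max_le hc
        rw [div_le_iff₀ hNpos]; nlinarith
      have haa : 0 ≤ q.1 + β := by
        have : -q.1 ≤ (q.2 - t)/(N+1) := by
          rw [le_div_iff₀ hN0]; nlinarith
        simpa [hβdef] using by linarith [this]
      have m1 := addCone ((0:ℝ),(1:ℝ)) h01 (q.1 + β) (β - (1-t)) haa hbb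
      have m2 := addCone ((-1:ℝ), N+1) hm1 (q.1 + β) (β - (1-t)) haa hbb
      rw [hHull] at m1 m2 ⊢
      have hcomb := hconv m1 m2 ht0 (by linarith : (0:ℝ) ≤ 1 - t) (by ring)
      convert hcomb using 1
      have hβval : β * (N+1) = q.2 - t := by
        rw [hβdef, div_mul_cancel₀]; exact ne_of_gt hN0
      rw [Prod.ext_iff]
      simp only [Prod.fst_add, Prod.snd_add, Prod.smul_fst, Prod.smul_snd,
        Prod.mk_add_mk, smul_eq_mul]
      constructor <;> nlinarith [hβval]
  -- the set equality
  have hset : σ \ (s • Hullm ∪ (Expm + σ)) =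
      {p : ℝ × ℝ | (0 ≤ p.2 ∧ 0 ≤ ((n:ℝ)+1)*p.1+p.2) ∧
        (p.1+p.2 < s ∨ (n:ℝ)*p.1+p.2 < s)} := by
    ext p
    simp only [mem_diff, mem_union, mem_setOf_eq, not_or]
    constructor
    · rintro ⟨hpσ, hpu⟩
      rw [memσ] at hpσ
      refine ⟨hpσ, ?_⟩
      by_contra hcon
      push_neg at hcon
      obtain ⟨hc1, hc2⟩ := hcon
      apply hpu.1
      -- p ∈ s • Hullm
      have hkey : s⁻¹ • p ∈ Hullm := by
        apply KHull
        · show 0 ≤ s⁻¹ * p.2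
          exact mul_nonneg (inv_nonneg.2 h0.le) hpσ.1
        · show 0 ≤ (N+1) * (s⁻¹ * p.1) + s⁻¹ * p.2
          have e : (N+1) * (s⁻¹ * p.1) + s⁻¹ * p.2 = ((N+1)*p.1+p.2)/s := by
            field_simp
          rw [e]
          exact div_nonneg hpσ.2 h0.le
        · show 1 ≤ s⁻¹ * p.1 + s⁻¹ * p.2
          have e : s⁻¹ * p.1 + s⁻¹ * p.2 = (p.1+p.2)/s := by
            field_simp
          rw [e, le_div_iff₀ h0]
          linarith
        · show 1 ≤ N * (s⁻¹ * p.1) + s⁻¹ * p.2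
          have e : N * (s⁻¹ * p.1) + s⁻¹ * p.2 = (N*p.1+p.2)/s := by
            field_simp
          rw [e, le_div_iff₀ h0]
          linarith
      have : s • (s⁻¹ • p) = p := smul_inv_smul₀ (ne_of_gt h0) p
      rw [← this]
      exact smul_mem_smul_set hkey
    · rintro ⟨⟨hp1, hp2⟩, hp3⟩
      refine ⟨(memσ p).2 ⟨hp1, hp2⟩, ?_⟩
      constructor
      · rintro hp
        obtain ⟨q, hq, rfl⟩ := hp
        obtain ⟨k1, k2, k3, k4⟩ := hullK q hq
        have e1 : (s • q).1 = s * q.1 := rfl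
        have e2 : (s • q).2 = s * q.2 := rfl
        rcases hp3 with h | h
        · rw [e1, e2] at h; nlinarith
        · rw [e1, e2] at h; nlinarith
      · rintro hp
        rw [Set.mem_add] at hp
        obtain ⟨v, hv, c, hc, rfl⟩ := hp
        obtain ⟨k1, k2, k3, k4⟩ := expK v hv
        rw [memσ] at hc
        obtain ⟨c1, c2⟩ := hc
        have cs1 : 0 ≤ c.1 + c.2 := by nlinarith
        have cs2 : 0 ≤ N * c.1 + c.2 := by nlinarith
        have e1 : (v + c).1 = v.1 + c.1 := rfl
        have e2 : (v + c).2 = v.2 + c.2 := rfl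
        rcases hp3 with h | h
        · rw [e1, e2] at h; linarith
        · rw [e1, e2] at h; linarith
  rw [hset]
  exact volume_E n hn s h0
end

section
/- For the Veronese cone σ^∨ = cone((1,0),(1,n)) ⊆ ℝ² with S = σ^∨ ∩ ℤ² and m generated by the lattice points (1,0),(1,1),...,(1,n), the volume of σ^∨ \ (s·Hull m ∪ (Exp m + σ^∨)) equals n·s²/2 for 0 < s ≤ 1, equals −(n²/2)(s−1)² + n(s−1) + n/2 for 1 ≤ s ≤ 1 + 1/n, and equals (n+1)/2 for s ≥ 1 + 1/n. -/
open Set Pointwise MeasureTheory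


private lemma vv_sigma_char (n : ℕ) (hn : 1 ≤ n) (σ : Set (ℝ × ℝ))
    (hσ : σ = {x | ∃ a b : ℝ, 0 ≤ a ∧ 0 ≤ b ∧
      x = a • ((1 : ℝ), (0 : ℝ)) + b • ((1 : ℝ), (n : ℝ))}) :
    σ = {p : ℝ × ℝ | 0 ≤ p.2 ∧ p.2 ≤ n * p.1} := by
  have hn0 : (0:ℝ) < n := by exact_mod_cast hn
  subst hσ; ext ⟨x, y⟩
  simp only [mem_setOf_eq, Prod.smul_mk, smul_eq_mul, Prod.mk_add_mk, Prod.mk.injEq]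
  constructor
  · rintro ⟨a, b, ha, hb, hx, hy⟩
    constructor
    · rw [hy]; positivity
    · rw [hx, hy]; nlinarith
  · rintro ⟨hy0, hyn⟩
    refine ⟨x - y / n, y / n, ?_, by positivity, by ring, by field_simp; ring⟩
    rw [sub_nonneg, div_le_iff₀ hn0]; linarith


private lemma vv_exp_char (n : ℕ) (hn : 1 ≤ n) (Expm : Set (ℝ × ℝ)) (σ : Set (ℝ × ℝ))
    (hσ : σ = {p : ℝ × ℝ | 0 ≤ p.2 ∧ p.2 ≤ n * p.1})
    (hExp : Expm = {v | v ∈ σ ∧ (∃ z₁ z₂ : ℤ, v = ((z₁ : ℝ), (z₂ : ℝ))) ∧ v ≠ 0}) :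
    Expm = {p : ℝ × ℝ | ∃ a b : ℤ, 1 ≤ a ∧ 0 ≤ b ∧ (b : ℝ) ≤ n * a ∧ p = ((a:ℝ), (b:ℝ))} := by
  subst hσ hExp; ext ⟨x, y⟩
  simp only [mem_setOf_eq, Prod.mk.injEq, ne_eq, Prod.ext_iff, Prod.fst_zero, Prod.snd_zero]
  constructor
  · rintro ⟨⟨hy0, hyn⟩, ⟨a, b, hx, hy⟩, hne⟩
    subst hx; subst hy
    have hb0 : 0 ≤ b := by exact_mod_cast hy0
    have hbn' : b ≤ (n : ℤ) * a := by exact_mod_cast hyn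
    have hn' : (1 : ℤ) ≤ (n : ℤ) := by exact_mod_cast hn
    have ha1 : 1 ≤ a := by
      by_contra h
      push_neg at h
      have ha0 : a ≤ 0 := by omega
      have hb : b = 0 := le_antisymm (by nlinarith) hb0
      have ha' : a = 0 := by nlinarith
      exact hne ⟨by exact_mod_cast congrArg Int.cast ha', by exact_mod_cast congrArg Int.cast hb⟩
    exact ⟨a, b, ha1, hb0, hyn, rfl, rfl⟩
  · rintro ⟨a, b, ha, hb, hbn, hx, hy⟩
    subst hx; subst hy
    refine ⟨⟨by exact_mod_cast hb, hbn⟩, ⟨a, b, rfl, rfl⟩, ?_⟩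
    rintro ⟨h1, -⟩
    have : (0:ℝ) < a := by exact_mod_cast ha
    linarith [h1 ▸ this]


private lemma vv_hull_char (n : ℕ) (hn : 1 ≤ n) (Expm : Set (ℝ × ℝ))
    (hE : Expm = {p : ℝ × ℝ | ∃ a b : ℤ, 1 ≤ a ∧ 0 ≤ b ∧ (b : ℝ) ≤ n * a ∧ p = ((a:ℝ), (b:ℝ))}) :
    convexHull ℝ Expm = {p : ℝ × ℝ | 1 ≤ p.1 ∧ 0 ≤ p.2 ∧ p.2 ≤ n * p.1} := by
  have hn0 : (1:ℝ) ≤ n := by exact_mod_cast hn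
  apply le_antisymm
  · apply convexHull_min
    · rintro ⟨x, y⟩ hp
      rw [hE] at hp
      obtain ⟨a, b, ha, hb, hbn, hxy⟩ := hp
      obtain ⟨hx, hy⟩ := Prod.mk.injEq .. ▸ hxy
      refine ⟨?_, ?_, ?_⟩ <;> simp only [hx, hy]
      · exact_mod_cast ha
      · exact_mod_cast hb
      · exact hbn
    · have h1 : Convex ℝ {p : ℝ × ℝ | 1 ≤ p.1} :=
        convex_halfSpace_ge (IsLinearMap.mk (fun a b => rfl) (fun c a => rfl)) 1
      have h2 : Convex ℝ {p : ℝ × ℝ | 0 ≤ p.2} :=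
        convex_halfSpace_ge (IsLinearMap.mk (fun a b => rfl) (fun c a => rfl)) 0
      have h3 : Convex ℝ {p : ℝ × ℝ | p.2 - n * p.1 ≤ 0} :=
        convex_halfSpace_le
          (IsLinearMap.mk (fun a b => by simp; ring) (fun c a => by simp; ring)) 0
      have : {p : ℝ × ℝ | 1 ≤ p.1 ∧ 0 ≤ p.2 ∧ p.2 ≤ n * p.1}
          = {p : ℝ × ℝ | 1 ≤ p.1} ∩ ({p : ℝ × ℝ | 0 ≤ p.2} ∩ {p : ℝ × ℝ | p.2 - n * p.1 ≤ 0}) := by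
        ext p; simp only [mem_setOf_eq, mem_inter_iff]; constructor
        · rintro ⟨u, v, w⟩; exact ⟨u, v, by linarith⟩
        · rintro ⟨u, v, w⟩; exact ⟨u, v, by linarith⟩
      rw [this]
      exact h1.inter (h2.inter h3)
  · rintro ⟨x, y⟩ ⟨hx1, hy0, hyn⟩
    simp only at hx1 hy0 hyn
    set M : ℕ := ⌈x⌉₊ + 1 with hM
    have hxM : x ≤ (M : ℝ) := by
      push_cast [hM]; linarith [Nat.le_ceil x]
    have hM2 : (2 : ℝ) ≤ M := by
      have h1 : 1 ≤ ⌈x⌉₊ := Nat.one_le_ceil_iff.mpr (by linarith)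
      have : (2:ℕ) ≤ M := by omega
      exact_mod_cast this
    have hMem : ∀ b : ℤ, 0 ≤ b → (b:ℝ) ≤ n * 1 → ((1:ℝ), (b:ℝ)) ∈ Expm := by
      intro b hb hbn; rw [hE]
      refine ⟨1, b, le_refl 1, hb, ?_, by push_cast; rfl⟩
      push_cast; push_cast at hbn; linarith
    have hMemM : ∀ b : ℤ, 0 ≤ b → (b:ℝ) ≤ n * M → ((M:ℝ), (b:ℝ)) ∈ Expm := by
      intro b hb hbn; rw [hE]
      refine ⟨(M:ℤ), b, ?_, hb, ?_, by push_cast; rfl⟩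
      · exact_mod_cast le_trans (by norm_num : (1:ℝ) ≤ 2) hM2
      · push_cast; push_cast at hbn; linarith
    have hnx : (0:ℝ) < n * x := by nlinarith
    set lam : ℝ := y / (n * x) with hlam
    have hlam0 : 0 ≤ lam := div_nonneg hy0 hnx.le
    have hlam1 : lam ≤ 1 := by rw [hlam, div_le_one hnx]; linarith
    set t : ℝ := (x - 1) / ((M:ℝ) - 1) with ht
    have hMd : (0:ℝ) < (M:ℝ) - 1 := by linarith
    have ht0 : 0 ≤ t := div_nonneg (by linarith) hMd.le
    have ht1 : t ≤ 1 := by rw [ht, div_le_one hMd]; linarith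
    have hq : ((1:ℝ), lam * n) ∈ convexHull ℝ Expm := by
      have v1 : ((1:ℝ), ((0:ℤ):ℝ)) ∈ convexHull ℝ Expm :=
        subset_convexHull ℝ _ (hMem 0 le_rfl (by push_cast; linarith))
      have v2 : ((1:ℝ), ((n:ℤ):ℝ)) ∈ convexHull ℝ Expm :=
        subset_convexHull ℝ _ (hMem (n:ℤ) (by positivity) (by push_cast; linarith))
      have hcomb := (convex_convexHull ℝ Expm) v1 v2
        (by linarith : (0:ℝ) ≤ 1 - lam) hlam0 (by ring)
      have heq : ((1:ℝ), lam * n)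
          = (1 - lam) • ((1:ℝ), ((0:ℤ):ℝ)) + lam • ((1:ℝ), ((n:ℤ):ℝ)) := by
        simp only [Prod.smul_mk, smul_eq_mul, Prod.mk_add_mk, Prod.mk.injEq]
        refine ⟨by ring, by push_cast; ring⟩
      rw [heq]; exact hcomb
    have hr : ((M:ℝ), lam * ((M:ℝ) * n)) ∈ convexHull ℝ Expm := by
      have v1 : ((M:ℝ), ((0:ℤ):ℝ)) ∈ convexHull ℝ Expm :=
        subset_convexHull ℝ _ (hMemM 0 le_rfl (by push_cast; positivity))
      have v2 : ((M:ℝ), (((M * n : ℕ):ℤ):ℝ)) ∈ convexHull ℝ Expm :=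
        subset_convexHull ℝ _ (hMemM ((M * n : ℕ):ℤ) (by positivity) (by push_cast; linarith))
      have hcomb := (convex_convexHull ℝ Expm) v1 v2
        (by linarith : (0:ℝ) ≤ 1 - lam) hlam0 (by ring)
      have heq : ((M:ℝ), lam * ((M:ℝ) * n))
          = (1 - lam) • ((M:ℝ), ((0:ℤ):ℝ)) + lam • ((M:ℝ), (((M * n : ℕ):ℤ):ℝ)) := by
        simp only [Prod.smul_mk, smul_eq_mul, Prod.mk_add_mk, Prod.mk.injEq]
        refine ⟨by ring, by push_cast; ring⟩
      rw [heq]; exact hcomb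
    have key := (convex_convexHull ℝ Expm) hq hr (by linarith : (0:ℝ) ≤ 1 - t) ht0 (by ring)
    have htM : t * ((M:ℝ) - 1) = x - 1 := div_mul_cancel₀ _ hMd.ne'
    have hly : lam * ((n:ℝ) * x) = y := div_mul_cancel₀ _ hnx.ne'
    have hxy : ((x, y) : ℝ × ℝ)
        = (1 - t) • ((1:ℝ), lam * n) + t • ((M:ℝ), lam * ((M:ℝ) * n)) := by
      simp only [Prod.smul_mk, smul_eq_mul, Prod.mk_add_mk, Prod.mk.injEq]
      constructor
      · nlinarith
      · nlinarith
    rw [hxy]; exact key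


private lemma vv_smul_char (n : ℕ) (s : ℝ) (hs : 0 < s) (Hullm : Set (ℝ × ℝ))
    (hH : Hullm = {p : ℝ × ℝ | 1 ≤ p.1 ∧ 0 ≤ p.2 ∧ p.2 ≤ n * p.1}) :
    s • Hullm = {p : ℝ × ℝ | s ≤ p.1 ∧ 0 ≤ p.2 ∧ p.2 ≤ n * p.1} := by
  subst hH; ext ⟨x, y⟩
  rw [mem_smul_set_iff_inv_smul_mem₀ hs.ne']
  simp only [Prod.smul_mk, smul_eq_mul, mem_setOf_eq]
  have h1 : (0:ℝ) < s⁻¹ := by positivity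
  have hss : s⁻¹ * s = 1 := inv_mul_cancel₀ hs.ne'
  constructor
  · rintro ⟨h2, h3, h4⟩
    refine ⟨by nlinarith, by nlinarith, by nlinarith⟩
  · rintro ⟨h2, h3, h4⟩
    refine ⟨by nlinarith, by positivity, by nlinarith⟩


private lemma vv_sum_char (n : ℕ) (hn : 1 ≤ n) (Expm σ : Set (ℝ × ℝ))
    (hσ : σ = {p : ℝ × ℝ | 0 ≤ p.2 ∧ p.2 ≤ n * p.1})
    (hE : Expm = {p : ℝ × ℝ | ∃ a b : ℤ, 1 ≤ a ∧ 0 ≤ b ∧ (b : ℝ) ≤ n * a ∧ p = ((a:ℝ), (b:ℝ))}) :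
    Expm + σ = {p : ℝ × ℝ | ∃ k : ℕ, k ≤ n ∧ (k:ℝ) ≤ p.2 ∧ p.2 ≤ n * (p.1 - 1) + k} := by
  ext ⟨x, y⟩
  rw [Set.mem_add]
  constructor
  · rintro ⟨v, hv, w, hw, hvw⟩
    rw [hE] at hv; rw [hσ] at hw
    obtain ⟨a, b, ha, hb, hbn, hab⟩ := hv
    obtain ⟨hw0, hwn⟩ := hw
    subst hab
    have hx : x = a + w.1 := by have h := congrArg Prod.fst hvw; simpa using h.symm
    have hy : y = b + w.2 := by have h := congrArg Prod.snd hvw; simpa using h.symm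
    have hbn' : b ≤ (n:ℤ) * a := by exact_mod_cast hbn
    set kZ : ℤ := max (b - n * (a - 1)) 0 with hkZ
    have hkZ0 : 0 ≤ kZ := le_max_right _ _
    have hkZn : kZ ≤ n := by
      have h1 : b - (n:ℤ) * (a - 1) ≤ n := by nlinarith
      have h2 : (0:ℤ) ≤ n := by positivity
      omega
    refine ⟨kZ.toNat, by omega, ?_, ?_⟩
    · have hk2 : kZ ≤ b := by
        have hna : (0:ℤ) ≤ n * (a - 1) := by nlinarith
        omega
      have : ((kZ.toNat : ℤ) : ℝ) ≤ (b:ℝ) := by exact_mod_cast (by omega : (kZ.toNat:ℤ) ≤ b)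
      push_cast at this ⊢
      rw [hy]; linarith
    · have hk1 : (b:ℝ) - n * ((a:ℝ) - 1) ≤ ((kZ.toNat : ℤ) : ℝ) := by
        have : b - (n:ℤ) * (a - 1) ≤ (kZ.toNat:ℤ) := by omega
        exact_mod_cast this
      push_cast at hk1 ⊢
      rw [hx, hy]; linarith
  · rintro ⟨k, hkn, hky, hyk⟩
    refine ⟨((1:ℝ), (k:ℝ)), ?_, ((x - 1), (y - k)), ?_, by simp⟩
    · rw [hE]
      refine ⟨1, (k:ℤ), le_refl 1, by positivity, ?_, by push_cast; rfl⟩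
      push_cast
      have : (k:ℝ) ≤ n := by exact_mod_cast hkn
      linarith
    · rw [hσ]
      exact ⟨by simpa using hky, by simp only []; linarith⟩


private lemma vv_set_eq (n : ℕ) (hn : 1 ≤ n) (s : ℝ) (hs : 0 < s)
    (σ SH E : Set (ℝ × ℝ))
    (hσ : σ = {p : ℝ × ℝ | 0 ≤ p.2 ∧ p.2 ≤ n * p.1})
    (hSH : SH = {p : ℝ × ℝ | s ≤ p.1 ∧ 0 ≤ p.2 ∧ p.2 ≤ n * p.1})
    (hE : E = {p : ℝ × ℝ | ∃ k : ℕ, k ≤ n ∧ (k:ℝ) ≤ p.2 ∧ p.2 ≤ n * (p.1 - 1) + k}) :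
    σ \ (SH ∪ E) =
      {p : ℝ × ℝ | 0 ≤ p.1 ∧ p.1 < min s 1 ∧ 0 ≤ p.2 ∧ p.2 ≤ n * p.1} ∪
      ⋃ k ∈ Finset.range n, {p : ℝ × ℝ | 1 ≤ p.1 ∧ p.1 < max (min s (1 + 1/(n:ℝ))) 1 ∧
        (k:ℝ) + n * (p.1 - 1) < p.2 ∧ p.2 < (k:ℝ) + 1} := by
  have hn0 : (1:ℝ) ≤ n := by exact_mod_cast hn
  have hnpos : (0:ℝ) < n := by linarith
  subst hσ hSH hE
  ext ⟨x, y⟩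
  simp only [mem_diff, mem_union, mem_setOf_eq, mem_iUnion, Finset.mem_range, not_or,
    not_exists, not_and, exists_prop]
  constructor
  · rintro ⟨⟨hy0, hyn⟩, hnSH, hnE⟩
    have hxs : x < s := by
      by_contra h
      push_neg at h
      exact hnSH h hy0 hyn
    have hx0 : 0 ≤ x := by nlinarith
    rcases lt_or_ge x 1 with hx1 | hx1
    · exact Or.inl ⟨hx0, lt_min hxs hx1, hy0, hyn⟩
    · right
      have hnc : ∀ k : ℕ, k ≤ n → (k:ℝ) ≤ y → ¬(y ≤ n * (x - 1) + k) := by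
        intro k hk hky h
        exact hnE k hk hky h
      -- first, n * (x-1) < 1
      have hsmall : n * (x - 1) < 1 := by
        by_contra h
        push_neg at h
        rcases le_or_gt ((n:ℝ)) y with hny | hny
        · exact hnc n le_rfl hny (by nlinarith)
        · have hfl : (⌊y⌋₊ : ℝ) ≤ y := Nat.floor_le hy0
          have hfn : ⌊y⌋₊ ≤ n := by
            have := Nat.floor_le_floor hny.le
            calc ⌊y⌋₊ ≤ ⌊(n:ℝ)⌋₊ := Nat.floor_le_floor hny.le
              _ = n := by simp
          exact hnc ⌊y⌋₊ hfn hfl (by nlinarith [Nat.lt_floor_add_one y])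
      have hx2 : x < 1 + 1/(n:ℝ) := by
        rw [← sub_lt_iff_lt_add']
        rw [show (1:ℝ)/(n:ℝ) = 1/(n:ℝ) from rfl]
        rw [lt_div_iff₀ hnpos]
        linarith [hsmall]
      have hxm : x < max (min s (1 + 1/(n:ℝ))) 1 := lt_max_of_lt_left (lt_min hxs hx2)
      set k := ⌊y⌋₊ with hk
      have hfl : (k : ℝ) ≤ y := Nat.floor_le hy0
      have hflt : y < k + 1 := Nat.lt_floor_add_one y
      have hkn : k < n := by
        by_contra h
        push_neg at h
        have : (n:ℝ) ≤ k := by exact_mod_cast h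
        exact hnc n le_rfl (le_trans this hfl) (by nlinarith)
      refine ⟨k, hkn, hx1, hxm, ?_, hflt⟩
      by_contra h
      push_neg at h
      exact hnc k (le_of_lt hkn) hfl (by linarith)
  · rintro (⟨hx0, hxm, hy0, hyn⟩ | ⟨k, hkn, hx1, hxm, hylo, hyhi⟩)
    · have hxs : x < s := lt_of_lt_of_le hxm (min_le_left _ _)
      have hx1 : x < 1 := lt_of_lt_of_le hxm (min_le_right _ _)
      refine ⟨⟨hy0, hyn⟩, fun h => absurd hxs (not_lt.mpr h), ?_⟩
      intro j hj hjy hyj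
      have : (0:ℝ) ≤ n * (x - 1) := by linarith
      nlinarith
    · have hk1n : (k:ℝ) + 1 ≤ n := by exact_mod_cast hkn
      have hkR : (0:ℝ) ≤ (k:ℝ) := Nat.cast_nonneg k
      have hy0 : 0 ≤ y := by nlinarith
      have hyn : y ≤ n * x := by nlinarith
      have hxs : x < s := by
        rcases le_or_gt 1 (min s (1 + 1/(n:ℝ))) with h | h
        · rw [max_eq_left h] at hxm
          exact lt_of_lt_of_le hxm (min_le_left _ _)
        · rw [max_eq_right h.le] at hxm
          linarith
      refine ⟨⟨hy0, hyn⟩, fun h => absurd hxs (not_lt.mpr h), ?_⟩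
      intro j hj hjy hyj
      have hjk : (j:ℝ) ≤ k := by
        have : (j:ℝ) < (k:ℝ) + 1 := lt_of_le_of_lt hjy hyhi
        exact_mod_cast Nat.lt_add_one_iff.mp (by exact_mod_cast this)
      linarith


private lemma vv_meas_cc (a b : ℝ) (f g : ℝ → ℝ) (hf : Continuous f) (hg : Continuous g) :
    MeasurableSet {p : ℝ × ℝ | a ≤ p.1 ∧ p.1 < b ∧ f p.1 ≤ p.2 ∧ p.2 ≤ g p.1} := by
  have h1 : MeasurableSet {p : ℝ × ℝ | a ≤ p.1} :=
    measurableSet_le measurable_const measurable_fst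
  have h2 : MeasurableSet {p : ℝ × ℝ | p.1 < b} :=
    measurableSet_lt measurable_fst measurable_const
  have h3 : MeasurableSet {p : ℝ × ℝ | f p.1 ≤ p.2} :=
    measurableSet_le (hf.measurable.comp measurable_fst) measurable_snd
  have h4 : MeasurableSet {p : ℝ × ℝ | p.2 ≤ g p.1} :=
    measurableSet_le measurable_snd (hg.measurable.comp measurable_fst)
  have : {p : ℝ × ℝ | a ≤ p.1 ∧ p.1 < b ∧ f p.1 ≤ p.2 ∧ p.2 ≤ g p.1}
      = {p : ℝ × ℝ | a ≤ p.1} ∩ ({p : ℝ × ℝ | p.1 < b} ∩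
        ({p : ℝ × ℝ | f p.1 ≤ p.2} ∩ {p : ℝ × ℝ | p.2 ≤ g p.1})) := by
    ext p; simp [mem_setOf_eq, and_assoc]
  rw [this]
  exact h1.inter (h2.inter (h3.inter h4))

private lemma vv_meas_oo (a b : ℝ) (f g : ℝ → ℝ) (hf : Continuous f) (hg : Continuous g) :
    MeasurableSet {p : ℝ × ℝ | a ≤ p.1 ∧ p.1 < b ∧ f p.1 < p.2 ∧ p.2 < g p.1} := by
  have h1 : MeasurableSet {p : ℝ × ℝ | a ≤ p.1} :=
    measurableSet_le measurable_const measurable_fst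
  have h2 : MeasurableSet {p : ℝ × ℝ | p.1 < b} :=
    measurableSet_lt measurable_fst measurable_const
  have h3 : MeasurableSet {p : ℝ × ℝ | f p.1 < p.2} :=
    measurableSet_lt (hf.measurable.comp measurable_fst) measurable_snd
  have h4 : MeasurableSet {p : ℝ × ℝ | p.2 < g p.1} :=
    measurableSet_lt measurable_snd (hg.measurable.comp measurable_fst)
  have : {p : ℝ × ℝ | a ≤ p.1 ∧ p.1 < b ∧ f p.1 < p.2 ∧ p.2 < g p.1}
      = {p : ℝ × ℝ | a ≤ p.1} ∩ ({p : ℝ × ℝ | p.1 < b} ∩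
        ({p : ℝ × ℝ | f p.1 < p.2} ∩ {p : ℝ × ℝ | p.2 < g p.1})) := by
    ext p; simp [mem_setOf_eq, and_assoc]
  rw [this]
  exact h1.inter (h2.inter (h3.inter h4))

private lemma vv_slice_vol (a b : ℝ) (hab : a ≤ b) (f g : ℝ → ℝ)
    (hf : Continuous f) (hg : Continuous g) (hfg : ∀ x ∈ Ico a b, f x ≤ g x)
    (S : Set (ℝ × ℝ)) (hS : MeasurableSet S)
    (hslice : ∀ x : ℝ, volume (Prod.mk x ⁻¹' S)
      = (Ico a b).indicator (fun x => ENNReal.ofReal (g x - f x)) x) :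
    volume S = ENNReal.ofReal (∫ x in a..b, (g x - f x)) := by
  rw [show (volume : Measure (ℝ × ℝ)) = (volume : Measure ℝ).prod volume from Measure.volume_eq_prod ℝ ℝ,
    Measure.prod_apply hS]
  rw [lintegral_congr hslice]
  rw [lintegral_indicator measurableSet_Ico]
  have hInt : IntegrableOn (fun x => g x - f x) (Ico a b) volume := by
    exact ((hg.sub hf).integrableOn_Icc).mono_set Ico_subset_Icc_self
  have hnn : 0 ≤ᶠ[ae (volume.restrict (Ico a b))] (fun x => g x - f x) := by
    rw [Filter.EventuallyLE, ae_restrict_iff' measurableSet_Ico]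
    exact ae_of_all _ fun x hx => sub_nonneg.2 (hfg x hx)
  rw [← ofReal_integral_eq_lintegral_ofReal hInt hnn]
  congr 1
  rw [MeasureTheory.integral_Ico_eq_integral_Ioo, ← MeasureTheory.integral_Ioc_eq_integral_Ioo,
    ← intervalIntegral.integral_of_le hab]

private lemma vv_vol_T (n : ℕ) (m₁ : ℝ) (h0 : 0 ≤ m₁) :
    volume {p : ℝ × ℝ | 0 ≤ p.1 ∧ p.1 < m₁ ∧ 0 ≤ p.2 ∧ p.2 ≤ n * p.1}
      = ENNReal.ofReal ((n:ℝ) * m₁ ^ 2 / 2) := by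
  have hvol := vv_slice_vol 0 m₁ h0 (fun _ => (0:ℝ)) (fun x => (n:ℝ) * x)
    continuous_const (by continuity)
    (fun x hx => by
      exact mul_nonneg (Nat.cast_nonneg n) hx.1)
    {p : ℝ × ℝ | 0 ≤ p.1 ∧ p.1 < m₁ ∧ 0 ≤ p.2 ∧ p.2 ≤ n * p.1}
    (vv_meas_cc 0 m₁ (fun _ => (0:ℝ)) (fun x => (n:ℝ) * x) continuous_const (by continuity))
    ?_
  · rw [hvol]
    congr 1
    simp_rw [sub_zero]
    rw [intervalIntegral.integral_const_mul, integral_id]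
    ring
  · intro x
    by_cases hx : x ∈ Ico 0 m₁
    · rw [indicator_of_mem hx]
      have : Prod.mk x ⁻¹' {p : ℝ × ℝ | 0 ≤ p.1 ∧ p.1 < m₁ ∧ 0 ≤ p.2 ∧ p.2 ≤ n * p.1}
          = Icc 0 ((n:ℝ) * x) := by
        ext y; simp only [mem_preimage, mem_setOf_eq, mem_Icc]
        exact ⟨fun h => ⟨h.2.2.1, h.2.2.2⟩, fun h => ⟨hx.1, hx.2, h.1, h.2⟩⟩
      rw [this, Real.volume_Icc]
    · rw [indicator_of_notMem hx]
      have : Prod.mk x ⁻¹' {p : ℝ × ℝ | 0 ≤ p.1 ∧ p.1 < m₁ ∧ 0 ≤ p.2 ∧ p.2 ≤ n * p.1}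
          = (∅ : Set ℝ) := by
        ext y; simp only [mem_preimage, mem_setOf_eq, mem_empty_iff_false, iff_false]
        rintro ⟨h1, h2, -⟩
        exact hx ⟨h1, h2⟩
      rw [this, measure_empty]

private lemma vv_vol_G (n : ℕ) (hn : 1 ≤ n) (k : ℕ) (m₂ : ℝ) (h1 : 1 ≤ m₂)
    (h2 : m₂ ≤ 1 + 1 / (n:ℝ)) :
    volume {p : ℝ × ℝ | 1 ≤ p.1 ∧ p.1 < m₂ ∧ (k:ℝ) + n * (p.1 - 1) < p.2 ∧ p.2 < (k:ℝ) + 1}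
      = ENNReal.ofReal ((1 + (n:ℝ)) * (m₂ - 1) - (n:ℝ) * (m₂ ^ 2 - 1) / 2) := by
  have hn0 : (0:ℝ) < n := by exact_mod_cast hn
  have hfg : ∀ x ∈ Ico 1 m₂, (k:ℝ) + n * (x - 1) ≤ (k:ℝ) + 1 := by
    intro x hx
    have hx2 : x < 1 + 1/(n:ℝ) := lt_of_lt_of_le hx.2 h2
    have : (n:ℝ) * (x - 1) < 1 := by
      have := (mul_lt_mul_iff_right₀ hn0).mpr hx2
      rw [mul_add, mul_one, mul_one_div, div_self hn0.ne'] at this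
      linarith
    linarith
  have hvol := vv_slice_vol 1 m₂ h1 (fun x => (k:ℝ) + n * (x - 1)) (fun _ => (k:ℝ) + 1)
    (by continuity) continuous_const hfg
    {p : ℝ × ℝ | 1 ≤ p.1 ∧ p.1 < m₂ ∧ (k:ℝ) + n * (p.1 - 1) < p.2 ∧ p.2 < (k:ℝ) + 1}
    (vv_meas_oo 1 m₂ (fun x => (k:ℝ) + n * (x - 1)) (fun _ => (k:ℝ) + 1) (by continuity) continuous_const)
    ?_
  · rw [hvol]
    congr 1
    have hre : ∀ x : ℝ, ((k:ℝ) + 1) - ((k:ℝ) + (n:ℝ) * (x - 1)) = (1 + (n:ℝ)) - (n:ℝ) * x := by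
      intro x; ring
    simp_rw [hre]
    rw [intervalIntegral.integral_sub intervalIntegrable_const
      (((by continuity : Continuous fun x : ℝ => (n:ℝ) * x)).intervalIntegrable _ _)]
    rw [intervalIntegral.integral_const, intervalIntegral.integral_const_mul, integral_id]
    simp only [smul_eq_mul]
    ring
  · intro x
    by_cases hx : x ∈ Ico 1 m₂
    · rw [indicator_of_mem hx]
      have : Prod.mk x ⁻¹' {p : ℝ × ℝ | 1 ≤ p.1 ∧ p.1 < m₂ ∧ (k:ℝ) + n * (p.1 - 1) < p.2 ∧ p.2 < (k:ℝ) + 1}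
          = Ioo ((k:ℝ) + n * (x - 1)) ((k:ℝ) + 1) := by
        ext y; simp only [mem_preimage, mem_setOf_eq, mem_Ioo]
        exact ⟨fun h => ⟨h.2.2.1, h.2.2.2⟩, fun h => ⟨hx.1, hx.2, h.1, h.2⟩⟩
      rw [this, Real.volume_Ioo]
    · rw [indicator_of_notMem hx]
      have : Prod.mk x ⁻¹' {p : ℝ × ℝ | 1 ≤ p.1 ∧ p.1 < m₂ ∧ (k:ℝ) + n * (p.1 - 1) < p.2 ∧ p.2 < (k:ℝ) + 1}
          = (∅ : Set ℝ) := by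
        ext y; simp only [mem_preimage, mem_setOf_eq, mem_empty_iff_false, iff_false]
        rintro ⟨hh1, hh2, -⟩
        exact hx ⟨hh1, hh2⟩
      rw [this, measure_empty]

private lemma vv_total (n : ℕ) (hn : 1 ≤ n) (s : ℝ) (hs : 0 < s)
    (σ SH E : Set (ℝ × ℝ))
    (hσ : σ = {p : ℝ × ℝ | 0 ≤ p.2 ∧ p.2 ≤ n * p.1})
    (hSH : SH = {p : ℝ × ℝ | s ≤ p.1 ∧ 0 ≤ p.2 ∧ p.2 ≤ n * p.1})
    (hE : E = {p : ℝ × ℝ | ∃ k : ℕ, k ≤ n ∧ (k:ℝ) ≤ p.2 ∧ p.2 ≤ n * (p.1 - 1) + k}) :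
    volume (σ \ (SH ∪ E)) = ENNReal.ofReal ((n:ℝ) * (min s 1) ^ 2 / 2 +
      (n:ℝ) * ((1 + (n:ℝ)) * (max (min s (1 + 1/(n:ℝ))) 1 - 1)
        - (n:ℝ) * ((max (min s (1 + 1/(n:ℝ))) 1) ^ 2 - 1) / 2)) := by
  have hn0 : (0:ℝ) < n := by exact_mod_cast hn
  set M : ℝ := max (min s (1 + 1/(n:ℝ))) 1 with hM
  have hM1 : 1 ≤ M := le_max_right _ _
  have hM2 : M ≤ 1 + 1/(n:ℝ) := by
    apply max_le (min_le_right _ _)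
    have : (0:ℝ) ≤ 1/(n:ℝ) := by positivity
    linarith
  rw [vv_set_eq n hn s hs σ SH E hσ hSH hE]
  set T := {p : ℝ × ℝ | 0 ≤ p.1 ∧ p.1 < min s 1 ∧ 0 ≤ p.2 ∧ p.2 ≤ n * p.1} with hT
  set G : ℕ → Set (ℝ × ℝ) := fun k => {p : ℝ × ℝ | 1 ≤ p.1 ∧ p.1 < M ∧
      (k:ℝ) + n * (p.1 - 1) < p.2 ∧ p.2 < (k:ℝ) + 1} with hG
  have hTm : MeasurableSet T :=
    vv_meas_cc 0 (min s 1) (fun _ => (0:ℝ)) (fun x => (n:ℝ) * x) continuous_const (by continuity)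
  have hGm : ∀ k, MeasurableSet (G k) := fun k =>
    vv_meas_oo 1 M (fun x => (k:ℝ) + n * (x - 1)) (fun _ => (k:ℝ) + 1) (by continuity)
      continuous_const
  have hUm : MeasurableSet (⋃ k ∈ Finset.range n, G k) :=
    Finset.measurableSet_biUnion _ fun k _ => hGm k
  have hdisj : Disjoint T (⋃ k ∈ Finset.range n, G k) := by
    rw [Set.disjoint_left]
    rintro p ⟨-, hp2, -⟩ hpU
    simp only [mem_iUnion, Finset.mem_range] at hpU
    obtain ⟨k, -, hk1, -⟩ := hpU
    have : p.1 < 1 := lt_of_lt_of_le hp2 (min_le_right _ _)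
    linarith
  rw [measure_union hdisj hUm]
  have hpd : (↑(Finset.range n) : Set ℕ).PairwiseDisjoint G := by
    intro j hj k hk hjk
    rw [Function.onFun, Set.disjoint_left]
    rintro p ⟨hp1, -, hpl, hph⟩ ⟨-, -, hql, hqh⟩
    rcases lt_or_gt_of_ne hjk with h | h
    · have : (j:ℝ) + 1 ≤ k := by exact_mod_cast h
      nlinarith
    · have : (k:ℝ) + 1 ≤ j := by exact_mod_cast h
      nlinarith
  rw [measure_biUnion_finset hpd fun k _ => hGm k]
  have hc : ∀ k ∈ Finset.range n, volume (G k)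
      = ENNReal.ofReal ((1 + (n:ℝ)) * (M - 1) - (n:ℝ) * (M ^ 2 - 1) / 2) := fun k _ =>
    vv_vol_G n hn k M hM1 hM2
  rw [Finset.sum_congr rfl hc, Finset.sum_const, Finset.card_range]
  rw [vv_vol_T n (min s 1) (le_min hs.le zero_le_one)]
  have hgn : 0 ≤ (1 + (n:ℝ)) * (M - 1) - (n:ℝ) * (M ^ 2 - 1) / 2 := by
    have h1 : 0 ≤ M - 1 := by linarith
    have h2 : 0 ≤ 1 - (n:ℝ) * (M - 1) := by
      have := (mul_le_mul_iff_right₀ hn0).mpr hM2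
      rw [mul_add, mul_one, mul_one_div, div_self hn0.ne'] at this
      linarith
    nlinarith [mul_nonneg h1 h2]
  rw [nsmul_eq_mul, ← ENNReal.ofReal_natCast n, ← ENNReal.ofReal_mul (Nat.cast_nonneg n),
    ← ENNReal.ofReal_add (by positivity) (by positivity)]


/-- For the Veronese cone `σ^∨ = cone((1,0),(1,n)) ⊆ ℝ²` with `m` generated by the
lattice points `(1,0), (1,1), ..., (1,n)` (`Exp m` = nonzero lattice points of `σ^∨`,
`Hull m` = its convex hull), the volume of `σ^∨ \ (s · Hull m ∪ (Exp m + σ^∨))` is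
`n s²/2` for `0 < s ≤ 1`, is `-(n²/2)(s-1)² + n(s-1) + n/2` for `1 ≤ s ≤ 1 + 1/n`,
and is `(n+1)/2` for `s ≥ 1 + 1/n`. -/
theorem veronese_volume (n : ℕ) (hn : 1 ≤ n)
    (σ Expm Hullm : Set (ℝ × ℝ))
    (hσ : σ = {x | ∃ a b : ℝ, 0 ≤ a ∧ 0 ≤ b ∧
      x = a • ((1 : ℝ), (0 : ℝ)) + b • ((1 : ℝ), (n : ℝ))})
    (hExp : Expm = {v | v ∈ σ ∧ (∃ z₁ z₂ : ℤ, v = ((z₁ : ℝ), (z₂ : ℝ))) ∧ v ≠ 0})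
    (hHull : Hullm = convexHull ℝ Expm) :
    ∀ s : ℝ, 0 < s →
      ((s ≤ 1 →
        volume (σ \ (s • Hullm ∪ (Expm + σ))) =
          ENNReal.ofReal ((n : ℝ) * s ^ 2 / 2)) ∧
      (1 ≤ s → s ≤ 1 + 1 / (n : ℝ) →
        volume (σ \ (s • Hullm ∪ (Expm + σ))) =
          ENNReal.ofReal
            (-((n : ℝ) ^ 2 / 2) * (s - 1) ^ 2 + (n : ℝ) * (s - 1) + (n : ℝ) / 2)) ∧
      (1 + 1 / (n : ℝ) ≤ s →
        volume (σ \ (s • Hullm ∪ (Expm + σ))) =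
          ENNReal.ofReal (((n : ℝ) + 1) / 2))) := by
  intro s hs
  have hn0 : (0:ℝ) < n := by exact_mod_cast hn
  have hn1 : (0:ℝ) < 1/(n:ℝ) := by positivity
  have hσ' := vv_sigma_char n hn σ hσ
  have hE' := vv_exp_char n hn Expm σ hσ' hExp
  have hH' : Hullm = {p : ℝ × ℝ | 1 ≤ p.1 ∧ 0 ≤ p.2 ∧ p.2 ≤ n * p.1} := by
    rw [hHull, vv_hull_char n hn Expm hE']
  have hSH := vv_smul_char n s hs Hullm hH'
  have hEσ := vv_sum_char n hn Expm σ hσ' hE'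
  have htot := vv_total n hn s hs σ (s • Hullm) (Expm + σ) hσ' hSH hEσ
  refine ⟨?_, ?_, ?_⟩
  · intro hs1
    rw [htot]
    have h1 : min s 1 = s := min_eq_left hs1
    have h2 : min s (1 + 1/(n:ℝ)) = s := min_eq_left (by linarith)
    have h3 : max s 1 = 1 := max_eq_right hs1
    rw [h1, h2, h3]
    congr 1
    ring
  · intro h1s hs2
    rw [htot]
    have h1 : min s 1 = 1 := min_eq_right h1s
    have h2 : min s (1 + 1/(n:ℝ)) = s := min_eq_left hs2
    have h3 : max s 1 = s := max_eq_left h1s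
    rw [h1, h2, h3]
    congr 1
    ring
  · intro hs3
    rw [htot]
    have h1 : min s 1 = 1 := min_eq_right (by linarith)
    have h2 : min s (1 + 1/(n:ℝ)) = 1 + 1/(n:ℝ) := min_eq_right hs3
    have h3 : max (1 + 1/(n:ℝ)) 1 = 1 + 1/(n:ℝ) := max_eq_left (by linarith)
    rw [h1, h2, h3]
    congr 1
    field_simp
    ring
end
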